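/- arXiv:2107.01992 — 7 statements merged into one kernel-verified Lean document; each statement's English description precedes it below -/
import Mathlib

section
/- For every g ∈ SL_N(ℂ), every Hermitian N×N complex matrix h, every column vector v ∈ ℂ^N and all Hermitian N×N matrices H_1, …, H_{N−1}, one has pbar(g·v, (g*)⁻¹·h·g⁻¹)((g*)⁻¹H_1 g⁻¹, …, (g*)⁻¹H_{N−1} g⁻¹) = pbar(v, h)(H_1, …, H_{N−1}); that is, the form p̄ is SL_N(ℂ)-invariant: g* p̄(g v) = p̄(v). -/
open Matrix BigOperators

noncomputable section

/-- The `i`-th entry of the row vector `v* h`, where `v*` is the conjugate transpose of the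
column vector `v`. -/
def vstarM {N : ℕ} (v : Fin N → ℂ) (h : Matrix (Fin N) (Fin N) ℂ) (i : Fin N) : ℂ :=
  ∑ j, (starRingEnd ℂ) (v j) * h j i

/-- `pbar(v,h)(H_1,…,H_{N−1})` : the value of the `(N-1)`-form `p̄(v)` at the point `h` on
the tangent vectors `H_1,…,H_{N-1}`.  Here `N = n+2`; the matrix `M⁽ⁱ⁾` has `(k,l)`-entry
`(v*H_l)_{r_k}` where `r` is the decreasing enumeration of `{0,…,N-1}` omitting `i`
(`r k = Fin.rev ((Fin.rev i).succAbove k)`), and the sign `(−1)^{i−1}` (1-based) is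
`(−1)^{i}` in 0-based indexing. -/
def pbar {n : ℕ} (v : Fin (n + 2) → ℂ) (h : Matrix (Fin (n + 2)) (Fin (n + 2)) ℂ)
    (H : Fin (n + 1) → Matrix (Fin (n + 2)) (Fin (n + 2)) ℂ) : ℂ :=
  2 * (-1 : ℂ) ^ ((n + 2) * (n + 1) / 2) *
    ∑ i : Fin (n + 2), (-1 : ℂ) ^ (i : ℕ) * vstarM v h i *
      Matrix.det (Matrix.of fun k l : Fin (n + 1) =>
        vstarM v (H l) (Fin.rev ((Fin.rev i).succAbove k)))

/-- `vstarM` is the `vecMul` of `star v`. -/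
lemma vstarM_eq_vecMul {N : ℕ} (v : Fin N → ℂ) (A : Matrix (Fin N) (Fin N) ℂ) :
    vstarM v A = (star v) ᵥ* A := by
  funext i
  simp [vstarM, Matrix.vecMul, dotProduct]

/-- how `vstarM` transforms under the action of `g`. -/
lemma vstarM_transform {n : ℕ} (g : Matrix.SpecialLinearGroup (Fin (n + 2)) ℂ)
    (A : Matrix (Fin (n + 2)) (Fin (n + 2)) ℂ) (v : Fin (n + 2) → ℂ) :
    vstarM ((g : Matrix (Fin (n + 2)) (Fin (n + 2)) ℂ) *ᵥ v)
        (((g : Matrix (Fin (n + 2)) (Fin (n + 2)) ℂ)ᴴ)⁻¹ * A *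
          (g : Matrix (Fin (n + 2)) (Fin (n + 2)) ℂ)⁻¹)
      = (vstarM v A) ᵥ* (g : Matrix (Fin (n + 2)) (Fin (n + 2)) ℂ)⁻¹ := by
  set G : Matrix (Fin (n + 2)) (Fin (n + 2)) ℂ := (g : Matrix (Fin (n + 2)) (Fin (n + 2)) ℂ)
  have hdet : G.det = 1 := g.prop
  have hdetH : Gᴴ.det ≠ 0 := by
    rw [Matrix.det_conjTranspose, hdet]
    simp
  have hGH : Gᴴ * (Gᴴ)⁻¹ = 1 := Matrix.mul_nonsing_inv _ (Ne.isUnit hdetH)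
  rw [vstarM_eq_vecMul, vstarM_eq_vecMul, Matrix.star_mulVec, Matrix.vecMul_vecMul]
  have : Gᴴ * ((Gᴴ)⁻¹ * A * G⁻¹) = A * G⁻¹ := by
    rw [show (Gᴴ)⁻¹ * A * G⁻¹ = (Gᴴ)⁻¹ * (A * G⁻¹) from by rw [mul_assoc], ← mul_assoc, hGH, one_mul]
  rw [this, ← Matrix.vecMul_vecMul]

/-- the alternating sum in `pbar` as a single determinant, up to the sign of the
reversal permutation. -/
lemma sum_eq_sign_mul_det {n : ℕ} (u : Fin (n + 2) → ℂ) (x : Fin (n + 1) → Fin (n + 2) → ℂ) :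
    ∑ i : Fin (n + 2), (-1 : ℂ) ^ (i : ℕ) * u i *
        Matrix.det (Matrix.of fun k l : Fin (n + 1) => x l (Fin.rev ((Fin.rev i).succAbove k)))
      = ((Equiv.Perm.sign (Fin.revPerm : Equiv.Perm (Fin (n + 1))) : ℤ) : ℂ) *
        Matrix.det (Matrix.of fun i j : Fin (n + 2) => Fin.cons (α := fun _ => ℂ) (u i) (fun l => x l i) j) := by
  set B : Matrix (Fin (n + 2)) (Fin (n + 2)) ℂ :=
    Matrix.of fun i j : Fin (n + 2) => Fin.cons (α := fun _ => ℂ) (u i) (fun l => x l i) j with hB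
  have hM : ∀ i : Fin (n + 2),
      (Matrix.of fun k l : Fin (n + 1) => x l (Fin.rev ((Fin.rev i).succAbove k)))
        = (B.submatrix i.succAbove Fin.succ).submatrix (Fin.revPerm : Equiv.Perm (Fin (n+1))) id := by
    intro i
    ext k l
    have h1 : Fin.rev ((Fin.rev i).succAbove k) = i.succAbove (Fin.rev k) := by
      rw [Fin.rev_succAbove, Fin.rev_rev]
    simp [hB, h1]
  rw [Matrix.det_succ_column_zero B]
  rw [Finset.mul_sum]
  refine Finset.sum_congr rfl fun i _ => ?_
  rw [hM i, Matrix.det_permute]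
  have hB0 : B i 0 = u i := by simp [hB]
  rw [hB0]
  push_cast
  ring

/-- the form `p̄` is `SL_N(ℂ)`-invariant:
`g* p̄(g v) = p̄(v)`, i.e. for every `g ∈ SL_N(ℂ)`, Hermitian `h`, `v ∈ ℂ^N`, and Hermitian
tangent vectors `H_1,…,H_{N-1}` one has
`pbar(g·v, (g*)⁻¹ h g⁻¹)((g*)⁻¹H_1 g⁻¹, …) = pbar(v,h)(H_1,…)`. -/
theorem pbar_SL_invariant {n : ℕ} (g : Matrix.SpecialLinearGroup (Fin (n + 2)) ℂ)
    (h : Matrix (Fin (n + 2)) (Fin (n + 2)) ℂ) (hh : h.IsHermitian)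
    (v : Fin (n + 2) → ℂ)
    (H : Fin (n + 1) → Matrix (Fin (n + 2)) (Fin (n + 2)) ℂ)
    (hH : ∀ j, (H j).IsHermitian) :
    pbar ((g : Matrix (Fin (n + 2)) (Fin (n + 2)) ℂ) *ᵥ v)
      (((g : Matrix (Fin (n + 2)) (Fin (n + 2)) ℂ)ᴴ)⁻¹ * h *
        (g : Matrix (Fin (n + 2)) (Fin (n + 2)) ℂ)⁻¹)
      (fun j => ((g : Matrix (Fin (n + 2)) (Fin (n + 2)) ℂ)ᴴ)⁻¹ * H j *
        (g : Matrix (Fin (n + 2)) (Fin (n + 2)) ℂ)⁻¹)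
      = pbar v h H := by
  set G : Matrix (Fin (n + 2)) (Fin (n + 2)) ℂ := (g : Matrix (Fin (n + 2)) (Fin (n + 2)) ℂ)
  set u : Fin (n + 2) → ℂ := vstarM v h with hu
  set x : Fin (n + 1) → Fin (n + 2) → ℂ := fun l => vstarM v (H l) with hx
  unfold pbar
  congr 1
  have h1 : vstarM (G *ᵥ v) ((Gᴴ)⁻¹ * h * G⁻¹) = u ᵥ* G⁻¹ := vstarM_transform g h v
  have h2 : ∀ l, vstarM (G *ᵥ v) ((Gᴴ)⁻¹ * H l * G⁻¹) = (x l) ᵥ* G⁻¹ :=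
    fun l => vstarM_transform g (H l) v
  simp only [h1, h2]
  rw [sum_eq_sign_mul_det (u ᵥ* G⁻¹) (fun l => x l ᵥ* G⁻¹), sum_eq_sign_mul_det u x]
  congr 1
  have hBB : (Matrix.of fun i j : Fin (n + 2) =>
      Fin.cons (α := fun _ => ℂ) ((u ᵥ* G⁻¹) i) (fun l => (x l ᵥ* G⁻¹) i) j)
      = (G⁻¹)ᵀ * (Matrix.of fun i j : Fin (n + 2) => Fin.cons (α := fun _ => ℂ) (u i) (fun l => x l i) j) := by
    ext i j
    refine Fin.cases ?_ (fun l => ?_) j <;>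
      simp [Matrix.mul_apply, Matrix.vecMul, dotProduct, mul_comm]
  rw [hBB, Matrix.det_mul, Matrix.det_transpose, Matrix.det_nonsing_inv]
  have : G.det = 1 := g.prop
  rw [this]
  simp
end
end

section
/- For every v ∈ ℂ^N, every Hermitian N×N matrix h, and all Hermitian N×N matrices H_0, …, H_{N−1}: Σ_{j=0}^{N−1} (−1)^j · (d/dt at t = 0 of pbar(v, h + tH_j)(H_0, …, H_{j−1}, H_{j+1}, …, H_{N−1})) = dpbar(v)(H_0, …, H_{N−1}). Equivalently (since pbar(v,h) is linear in h), Σ_{j=0}^{N−1} (−1)^j pbar(v, H_j)(H_0, …, H_{j−1}, H_{j+1}, …, H_{N−1}) = dpbar(v)(H_0, …, H_{N−1}). This expresses that the exterior derivative of the (N−1)-form p̄(v) equals 2N(−1)^{(N+2)(N−1)/2} (v*dh)_N ∧ ⋯ ∧ (v*dh)_1. -/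
open Matrix BigOperators

noncomputable section

/-- The scalar `v* h v`. -/
def vhv {N : ℕ} (v : Fin N → ℂ) (h : Matrix (Fin N) (Fin N) ℂ) : ℂ :=
  ∑ i, vstarM v h i * v i

/-- `dpbar(v)(H_1,…,H_N) = 2N(−1)^{(N+2)(N−1)/2} det M` where `M` has `(k,l)`-entry
`(v*H_l)_{N+1−k}` (1-based), i.e. `(v*H_l)_{Fin.rev k}` in 0-based indexing. -/
def dpbar {n : ℕ} (v : Fin (n + 2) → ℂ)
    (H : Fin (n + 2) → Matrix (Fin (n + 2)) (Fin (n + 2)) ℂ) : ℂ :=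
  2 * (n + 2) * (-1 : ℂ) ^ ((n + 4) * (n + 1) / 2) *
    Matrix.det (Matrix.of fun k l : Fin (n + 2) => vstarM v (H l) (Fin.rev k))

lemma vstarM_add_smul {N : ℕ} (v : Fin N → ℂ) (h G : Matrix (Fin N) (Fin N) ℂ) (c : ℂ)
    (i : Fin N) : vstarM v (h + c • G) i = vstarM v h i + c * vstarM v G i := by
  simp [vstarM, Matrix.add_apply, Matrix.smul_apply, mul_add, Finset.sum_add_distrib,
    Finset.mul_sum, smul_eq_mul, mul_left_comm]

lemma pbar_add_smul {n : ℕ} (v : Fin (n + 2) → ℂ)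
    (h G : Matrix (Fin (n + 2)) (Fin (n + 2)) ℂ) (c : ℂ)
    (Hs : Fin (n + 1) → Matrix (Fin (n + 2)) (Fin (n + 2)) ℂ) :
    pbar v (h + c • G) Hs = pbar v h Hs + c * pbar v G Hs := by
  simp only [pbar, vstarM_add_smul, mul_add, add_mul, Finset.sum_add_distrib]
  congr 1
  simp only [Finset.mul_sum]
  apply Finset.sum_congr rfl
  intro i _
  ring

lemma neg_one_pow_rev {n : ℕ} (i : Fin (n + 2)) :
    (-1 : ℂ) ^ ((Fin.rev i : Fin (n + 2)) : ℕ) = (-1) ^ (n + 1) * (-1) ^ (i : ℕ) := by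
  have hi : (i : ℕ) < n + 2 := i.isLt
  have h1 : ((Fin.rev i : Fin (n + 2)) : ℕ) = n + 1 - (i : ℕ) := by
    rw [Fin.val_rev]; omega
  have h2 : (-1 : ℂ) ^ (n + 1 - (i : ℕ)) * (-1 : ℂ) ^ (i : ℕ) = (-1) ^ (n + 1) := by
    rw [← pow_add]; congr 1; omega
  have h3 : (-1 : ℂ) ^ (i : ℕ) * (-1 : ℂ) ^ (i : ℕ) = 1 := by
    rw [← pow_add]; exact Even.neg_one_pow ⟨(i : ℕ), rfl⟩
  calc (-1 : ℂ) ^ ((Fin.rev i : Fin (n + 2)) : ℕ) = (-1) ^ (n + 1 - (i : ℕ)) := by rw [h1]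
    _ = (-1) ^ (n + 1 - (i : ℕ)) * ((-1) ^ (i : ℕ) * (-1) ^ (i : ℕ)) := by rw [h3, mul_one]
    _ = ((-1) ^ (n + 1 - (i : ℕ)) * (-1) ^ (i : ℕ)) * (-1) ^ (i : ℕ) := by ring
    _ = (-1) ^ (n + 1) * (-1) ^ (i : ℕ) := by rw [h2]

lemma pbar_cofactor {n : ℕ} (v : Fin (n + 2) → ℂ)
    (H : Fin (n + 2) → Matrix (Fin (n + 2)) (Fin (n + 2)) ℂ) (j : Fin (n + 2)) :
    (-1 : ℂ) ^ (j : ℕ) * pbar v (H j) (fun k => H (j.succAbove k))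
      = 2 * (-1 : ℂ) ^ ((n + 2) * (n + 1) / 2) * (-1 : ℂ) ^ (n + 1) *
        Matrix.det (Matrix.of fun k l : Fin (n + 2) => vstarM v (H l) (Fin.rev k)) := by
  set A : Matrix (Fin (n + 2)) (Fin (n + 2)) ℂ :=
    Matrix.of fun k l : Fin (n + 2) => vstarM v (H l) (Fin.rev k) with hA
  have hdet := Matrix.det_succ_column A j
  have hsum : ∑ i : Fin (n + 2), (-1 : ℂ) ^ (i : ℕ) * vstarM v (H j) i *
        Matrix.det (Matrix.of fun k l : Fin (n + 1) =>
          vstarM v (H (j.succAbove l)) (Fin.rev ((Fin.rev i).succAbove k)))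
      = ∑ i : Fin (n + 2), (-1 : ℂ) ^ ((Fin.rev i : Fin (n + 2)) : ℕ) * A i j *
          Matrix.det (A.submatrix i.succAbove j.succAbove) := by
    apply Fintype.sum_bijective Fin.rev Fin.rev_bijective
    intro i
    simp [hA, Fin.rev_rev, Matrix.submatrix]
  rw [pbar, hsum, hdet, Finset.mul_sum, Finset.mul_sum, Finset.mul_sum]
  apply Finset.sum_congr rfl
  intro i _
  rw [neg_one_pow_rev, pow_add]
  ring

/-- the exterior derivative of the `(N−1)`-form `p̄(v)` equals
`2N(−1)^{(N+2)(N−1)/2} (v*dh)_N ∧ ⋯ ∧ (v*dh)_1`; concretely, for Hermitian `h` and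
Hermitian tangent vectors `H_0,…,H_{N-1}`,
`Σ_j (−1)^j ∂_t|_{t=0} pbar(v, h + tH_j)(H_0,…,Ĥ_j,…,H_{N−1}) = dpbar(v)(H_0,…,H_{N−1})`,
and equivalently (by linearity of `pbar(v,·)`)
`Σ_j (−1)^j pbar(v, H_j)(H_0,…,Ĥ_j,…,H_{N−1}) = dpbar(v)(H_0,…,H_{N−1})`. -/
theorem d_pbar_eq {n : ℕ} (v : Fin (n + 2) → ℂ)
    (h : Matrix (Fin (n + 2)) (Fin (n + 2)) ℂ) (hh : h.IsHermitian)
    (H : Fin (n + 2) → Matrix (Fin (n + 2)) (Fin (n + 2)) ℂ)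
    (hH : ∀ j, (H j).IsHermitian) :
    (∑ j : Fin (n + 2), (-1 : ℂ) ^ (j : ℕ) *
        deriv (fun t : ℝ =>
          pbar v (h + (t : ℂ) • H j) (fun k => H (j.succAbove k))) 0
      = dpbar v H) ∧
    (∑ j : Fin (n + 2), (-1 : ℂ) ^ (j : ℕ) *
        pbar v (H j) (fun k => H (j.succAbove k))
      = dpbar v H) := by
  have part2 : ∑ j : Fin (n + 2), (-1 : ℂ) ^ (j : ℕ) *
      pbar v (H j) (fun k => H (j.succAbove k)) = dpbar v H := by
    have hsum : ∑ j : Fin (n + 2), (-1 : ℂ) ^ (j : ℕ) *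
        pbar v (H j) (fun k => H (j.succAbove k))
        = ∑ _j : Fin (n + 2), 2 * (-1 : ℂ) ^ ((n + 2) * (n + 1) / 2) * (-1 : ℂ) ^ (n + 1) *
            Matrix.det (Matrix.of fun k l : Fin (n + 2) => vstarM v (H l) (Fin.rev k)) :=
      Finset.sum_congr rfl fun j _ => pbar_cofactor v H j
    rw [hsum, Finset.sum_const, Finset.card_univ, Fintype.card_fin, nsmul_eq_mul]
    have hexp : (n + 4) * (n + 1) / 2 = (n + 2) * (n + 1) / 2 + (n + 1) := by
      have h4 : (n + 4) * (n + 1) = (n + 2) * (n + 1) + (n + 1) * 2 := by ring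
      rw [h4, Nat.add_mul_div_right _ _ (by norm_num : 0 < 2)]
    rw [dpbar, hexp, pow_add]
    push_cast
    ring
  refine ⟨?_, part2⟩
  have hderiv : ∀ j : Fin (n + 2),
      deriv (fun t : ℝ => pbar v (h + (t : ℂ) • H j) (fun k => H (j.succAbove k))) 0
        = pbar v (H j) (fun k => H (j.succAbove k)) := by
    intro j
    have heq : (fun t : ℝ => pbar v (h + (t : ℂ) • H j) (fun k => H (j.succAbove k)))
        = fun t : ℝ => pbar v h (fun k => H (j.succAbove k))
            + (t : ℂ) * pbar v (H j) (fun k => H (j.succAbove k)) :=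
      funext fun t => pbar_add_smul v h (H j) (t : ℂ) (fun k => H (j.succAbove k))
    rw [heq]
    have hd : HasDerivAt (fun t : ℝ => pbar v h (fun k => H (j.succAbove k))
          + (t : ℂ) * pbar v (H j) (fun k => H (j.succAbove k)))
        (pbar v (H j) (fun k => H (j.succAbove k))) 0 := by
      simpa using ((Complex.ofRealCLM.hasDerivAt (x := (0 : ℝ))).mul_const
        (pbar v (H j) (fun k => H (j.succAbove k)))).const_add
        (pbar v h (fun k => H (j.succAbove k)))
    exact hd.deriv
  calc ∑ j : Fin (n + 2), (-1 : ℂ) ^ (j : ℕ) *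
        deriv (fun t : ℝ => pbar v (h + (t : ℂ) • H j) (fun k => H (j.succAbove k))) 0
      = ∑ j : Fin (n + 2), (-1 : ℂ) ^ (j : ℕ) *
          pbar v (H j) (fun k => H (j.succAbove k)) :=
        Finset.sum_congr rfl fun j _ => by rw [hderiv j]
    _ = dpbar v H := part2


end
end

section
/- For every v ∈ ℂ^N, every Hermitian N×N matrix h, and all Hermitian N×N matrices H_0, …, H_{N−1}: N · Σ_{j=0}^{N−1} (−1)^j (v*H_j v) · pbar(v,h)(H_0, …, H_{j−1}, H_{j+1}, …, H_{N−1}) = (v*hv) · dpbar(v)(H_0, …, H_{N−1}). (This is the identity N d(v*hv) ∧ p̄(v) = (v*hv) dp̄(v); note that the directional derivative of h ↦ v*hv in the direction H is v*Hv.) -/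
open Matrix BigOperators

noncomputable section

/-- `N d(v*hv) ∧ p̄(v) = (v*hv) dp̄(v)` : for every `v`, Hermitian `h`, and
Hermitian `H_0,…,H_{N−1}`,
`N · Σ_j (−1)^j (v*H_j v) · pbar(v,h)(H_0,…,Ĥ_j,…,H_{N−1}) = (v*hv) · dpbar(v)(H_0,…,H_{N−1})`
(the directional derivative of `h ↦ v*hv` in the direction `H` is `v*Hv`). -/
theorem d_vhv_wedge_pbar {n : ℕ} (v : Fin (n + 2) → ℂ)
    (h : Matrix (Fin (n + 2)) (Fin (n + 2)) ℂ) (hh : h.IsHermitian)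
    (H : Fin (n + 2) → Matrix (Fin (n + 2)) (Fin (n + 2)) ℂ)
    (hH : ∀ j, (H j).IsHermitian) :
    (n + 2 : ℂ) * ∑ j : Fin (n + 2), (-1 : ℂ) ^ (j : ℕ) * vhv v (H j) *
        pbar v h (fun k => H (j.succAbove k))
      = vhv v h * dpbar v H := by
  classical
  set W : Matrix (Fin (n+2)) (Fin (n+2)) ℂ :=
    Matrix.of fun k l => vstarM v (H l) (Fin.rev k) with hW
  have key : ∀ i : Fin (n+2),
      (∑ j : Fin (n+2), (-1:ℂ)^(j:ℕ) * vhv v (H j) *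
        Matrix.det (Matrix.of fun k l : Fin (n+1) =>
          vstarM v (H (j.succAbove l)) (Fin.rev ((Fin.rev i).succAbove k))))
      = (-1:ℂ)^((Fin.rev i : Fin (n+2)) : ℕ) * v i * W.det := by
    intro i
    set σ : Equiv.Perm (Fin (n+2)) := ((Fin.rev i).cycleRange).symm with hσ
    set B : Matrix (Fin (n+2)) (Fin (n+2)) ℂ := W.submatrix σ id with hB
    set A : Matrix (Fin (n+2)) (Fin (n+2)) ℂ :=
      B.updateRow 0 (fun l => vhv v (H l)) with hA
    have h1 : A.det = ∑ j : Fin (n+2), (-1:ℂ)^(j:ℕ) * vhv v (H j) *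
        Matrix.det (Matrix.of fun k l : Fin (n+1) =>
          vstarM v (H (j.succAbove l)) (Fin.rev ((Fin.rev i).succAbove k))) := by
      rw [Matrix.det_succ_row_zero]
      refine Finset.sum_congr rfl fun j _ => ?_
      have e0 : A 0 j = vhv v (H j) := by simp [hA]
      have e1 : A.submatrix Fin.succ j.succAbove =
          Matrix.of fun k l : Fin (n+1) =>
            vstarM v (H (j.succAbove l)) (Fin.rev ((Fin.rev i).succAbove k)) := by
        ext k l
        simp [hA, hB, hσ, hW, Matrix.updateRow_apply, Fin.succ_ne_zero]
      rw [e0, e1]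
    have hrow : (fun l => vhv v (H l)) = ∑ k : Fin (n+2), v (Fin.rev (σ k)) • B k := by
      ext l
      simp only [Finset.sum_apply, Pi.smul_apply, smul_eq_mul, hB,
        Matrix.submatrix_apply, hW, Matrix.of_apply, id]
      rw [vhv, ← Equiv.sum_comp (σ.trans (Fin.revPerm))
        (fun m => vstarM v (H l) m * v m)]
      simp [mul_comm]
    have h2 : A.det = v i * B.det := by
      rw [hA, hrow, Matrix.det_updateRow_sum]
      simp [hσ]
    have h3 : B.det = (-1:ℂ)^((Fin.rev i : Fin (n+2)) : ℕ) * W.det := by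
      rw [hB, Matrix.det_permute]
      congr 1
      rw [hσ]
      rw [show ((Fin.rev i).cycleRange).symm = ((Fin.rev i).cycleRange)⁻¹ from rfl]
      rw [map_inv, Fin.sign_cycleRange]
      push_cast
      simp
    rw [← h1, h2, h3]
    ring
  have expand : ∀ j : Fin (n+2),
      (-1:ℂ)^(j:ℕ) * vhv v (H j) * pbar v h (fun k => H (j.succAbove k))
      = ∑ i : Fin (n+2),
          (2 * (-1:ℂ)^((n+2)*(n+1)/2) * ((-1:ℂ)^(i:ℕ) * vstarM v h i)) *
          ((-1:ℂ)^(j:ℕ) * vhv v (H j) *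
            Matrix.det (Matrix.of fun k l : Fin (n+1) =>
              vstarM v (H (j.succAbove l)) (Fin.rev ((Fin.rev i).succAbove k)))) := by
    intro j
    rw [pbar, Finset.mul_sum, Finset.mul_sum]
    exact Finset.sum_congr rfl fun i _ => by ring
  rw [Finset.sum_congr rfl fun j _ => expand j, Finset.sum_comm]
  have step : ∀ i : Fin (n+2),
      (∑ j : Fin (n+2),
          (2 * (-1:ℂ)^((n+2)*(n+1)/2) * ((-1:ℂ)^(i:ℕ) * vstarM v h i)) *
          ((-1:ℂ)^(j:ℕ) * vhv v (H j) *
            Matrix.det (Matrix.of fun k l : Fin (n+1) =>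
              vstarM v (H (j.succAbove l)) (Fin.rev ((Fin.rev i).succAbove k)))))
      = 2 * (-1:ℂ)^((n+2)*(n+1)/2) * (-1:ℂ)^(n+1) * (vstarM v h i * v i) * W.det := by
    intro i
    rw [← Finset.mul_sum, key i]
    have hp : (-1:ℂ)^(i:ℕ) * (-1:ℂ)^((Fin.rev i : Fin (n+2)) : ℕ) = (-1:ℂ)^(n+1) := by
      rw [← pow_add]
      congr 1
      have h1 : ((Fin.rev i : Fin (n+2)) : ℕ) = n + 1 - (i:ℕ) := by
        simp [Fin.val_rev]
      have h2 := i.isLt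
      omega
    calc (2 * (-1:ℂ)^((n+2)*(n+1)/2) * ((-1:ℂ)^(i:ℕ) * vstarM v h i)) *
          ((-1:ℂ)^((Fin.rev i : Fin (n+2)) : ℕ) * v i * W.det)
        = 2 * (-1:ℂ)^((n+2)*(n+1)/2) *
            ((-1:ℂ)^(i:ℕ) * (-1:ℂ)^((Fin.rev i : Fin (n+2)) : ℕ)) *
            (vstarM v h i * v i) * W.det := by ring
      _ = _ := by rw [hp]
  rw [Finset.sum_congr rfl fun i _ => step i]
  have hsum : (∑ i : Fin (n+2), 2 * (-1:ℂ)^((n+2)*(n+1)/2) * (-1:ℂ)^(n+1) *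
        (vstarM v h i * v i) * W.det)
      = 2 * (-1:ℂ)^((n+2)*(n+1)/2) * (-1:ℂ)^(n+1) * vhv v h * W.det := by
    simp only [vhv, Finset.mul_sum, Finset.sum_mul]
  rw [hsum, dpbar]
  have hexp : (n+4)*(n+1)/2 = (n+2)*(n+1)/2 + (n+1) := by
    have h1 : (n+4)*(n+1) = (n+1)*(n+2) + 2*(n+1) := by ring
    have h2 : (n+2)*(n+1) = (n+1)*(n+2) := by ring
    obtain ⟨c, hc⟩ := Nat.even_mul_succ_self (n+1)
    rw [h1, h2, hc]
    omega
  rw [hexp, pow_add]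
  push_cast
  ring

end
end

section
/- Let P: ℂ^{1×N} → ℂ be a homogeneous polynomial function of degree p on row vectors (i.e. P(w) = Σ_{|I|=p} c_I w_1^{i_1}⋯w_N^{i_N}). Then for every v ∈ ℂ^N, every Hermitian N×N matrix h, and all Hermitian matrices H_0, …, H_{N−1}: Σ_{j=0}^{N−1} (−1)^j · (d/dt at t = 0 of P(v*(h+tH_j))) · pbar(v,h)(H_0, …, H_{j−1}, H_{j+1}, …, H_{N−1}) = (p/N) · P(v*h) · dpbar(v)(H_0, …, H_{N−1}). (This is the identity dP(v*h) ∧ p̄(v) = p N^{−1} P(v*h) dp̄(v).) -/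
open Matrix BigOperators

noncomputable section

open MvPolynomial in
lemma hasDerivAt_eval_line {N : ℕ} (a b : Fin N → ℂ) (P : MvPolynomial (Fin N) ℂ) :
    HasDerivAt (fun t : ℝ => MvPolynomial.eval (fun i => a i + (t : ℂ) * b i) P)
      (∑ i, b i * MvPolynomial.eval a (MvPolynomial.pderiv i P)) 0 := by
  induction P using MvPolynomial.induction_on with
  | C c => simpa using hasDerivAt_const (0:ℝ) c
  | add P Q hPd hQd => have := hPd.add hQd; simp only [map_add, mul_add, Finset.sum_add_distrib]; exact this
  | mul_X P j hPd =>
      have hg : HasDerivAt (fun t : ℝ => a j + (t : ℂ) * b j) (b j) 0 := by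
        have h1 : HasDerivAt (fun t : ℝ => (t : ℂ)) 1 0 := by
          exact (hasDerivAt_id (0:ℝ)).ofReal_comp.congr_deriv (by simp)
        simpa using (h1.mul_const (b j)).const_add (a j)
      have hmul := hPd.mul hg
      have : (fun t : ℝ => MvPolynomial.eval (fun i => a i + (t : ℂ) * b i) (P * X j))
          = fun t : ℝ => (MvPolynomial.eval (fun i => a i + (t : ℂ) * b i) P) *
              (a j + (t : ℂ) * b j) := by
        funext t; simp
      rw [this]
      refine hmul.congr_deriv (Eq.symm ?_)
      push_cast
      simp only [zero_mul, mul_zero, add_zero]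

      simp only [pderiv_mul, pderiv_X, map_add, eval_mul, eval_X]
      simp only [Pi.single_apply, apply_ite (MvPolynomial.eval a), _root_.map_one, _root_.map_zero,
        mul_ite, mul_one, mul_zero, mul_add, Finset.sum_add_distrib, Finset.sum_ite_eq,
        Finset.mem_univ, if_true]
      rw [Finset.sum_mul]
      congr 1
      · exact Finset.sum_congr rfl fun i _ => by ring
      · ring

open MvPolynomial in
lemma pderiv_monomial_eval {N : ℕ} (a : Fin N → ℂ) (d : Fin N →₀ ℕ) (c : ℂ) (i : Fin N) :
    a i * MvPolynomial.eval a (MvPolynomial.pderiv i (MvPolynomial.monomial d c)) =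
      (d i : ℂ) * MvPolynomial.eval a (MvPolynomial.monomial d c) := by
  rw [MvPolynomial.pderiv_monomial, MvPolynomial.eval_monomial, MvPolynomial.eval_monomial]
  rcases Nat.eq_zero_or_pos (d i) with h | h
  · simp [h]
  · rw [Finsupp.prod_fintype _ _ (fun j => pow_zero (a j)),
        Finsupp.prod_fintype _ _ (fun j => pow_zero (a j)),
        Fintype.prod_eq_mul_prod_compl i, Fintype.prod_eq_mul_prod_compl i]
    have h1 : (d - Finsupp.single i 1 : Fin N →₀ ℕ) i = d i - 1 := by
      simp [Finsupp.tsub_apply]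
    have h2 : ∀ j ∈ ({i}ᶜ : Finset (Fin N)), a j ^ ((d - Finsupp.single i 1 : Fin N →₀ ℕ) j) = a j ^ d j := by
      intro j hj
      have : j ≠ i := by simpa using hj
      simp [Finsupp.tsub_apply, Finsupp.single_apply, Ne.symm this]
    rw [Finset.prod_congr rfl h2, h1]
    have h3 : a i * a i ^ (d i - 1) = a i ^ d i := by
      conv_rhs => rw [← Nat.succ_pred_eq_of_pos h]
      rw [pow_succ', Nat.pred_eq_sub_one]
    calc a i * (c * (d i) * (a i ^ (d i - 1) * ∏ j ∈ {i}ᶜ, a j ^ d j))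
        = (d i : ℂ) * (c * ((a i * a i ^ (d i - 1)) * ∏ j ∈ {i}ᶜ, a j ^ d j)) := by ring
      _ = (d i : ℂ) * (c * (a i ^ d i * ∏ j ∈ {i}ᶜ, a j ^ d j)) := by rw [h3]

lemma euler_eval {N p : ℕ} (P : MvPolynomial (Fin N) ℂ) (hP : P.IsHomogeneous p)
    (a : Fin N → ℂ) :
    ∑ i, a i * MvPolynomial.eval a (MvPolynomial.pderiv i P)
      = (p : ℂ) * MvPolynomial.eval a P := by
  conv_lhs => rw [P.as_sum]
  conv_rhs => rw [P.as_sum]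
  simp only [map_sum, Finset.mul_sum]
  rw [Finset.sum_comm]
  refine Finset.sum_congr rfl fun d hd => ?_
  rw [Finset.sum_congr rfl fun i _ => pderiv_monomial_eval a d (P.coeff d) i,
    ← Finset.sum_mul]
  congr 1
  have hdeg : (Finsupp.weight 1 d : ℕ) = p := hP (MvPolynomial.mem_support_iff.mp hd)
  rw [← hdeg, Finsupp.weight_apply, Finsupp.sum_fintype _ _ (fun j => by simp)]
  push_cast
  simp

lemma key_det {n : ℕ} (A : Matrix (Fin (n+2)) (Fin (n+2)) ℂ) (i m : Fin (n+2)) :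
    ∑ j : Fin (n+2), (-1:ℂ)^(j:ℕ) * A i j *
      Matrix.det (Matrix.of fun k l : Fin (n+1) =>
        A (Fin.rev ((Fin.rev m).succAbove k)) (j.succAbove l))
    = if i = m then (-1:ℂ)^((Fin.rev m : ℕ)) *
        Matrix.det (Matrix.of fun k l : Fin (n+2) => A (Fin.rev k) l) else 0 := by
  set B : Matrix (Fin (n+2)) (Fin (n+2)) ℂ := Matrix.of fun k l => A (Fin.rev k) l with hB
  set D : Matrix (Fin (n+2)) (Fin (n+2)) ℂ :=
    Matrix.of fun k l => A ((Fin.cons i fun k' => Fin.rev ((Fin.rev m).succAbove k') : ∀ _ : Fin (n+2), Fin (n+2)) k) l with hD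
  have hexp : D.det = ∑ j : Fin (n+2), (-1:ℂ)^(j:ℕ) * A i j *
      Matrix.det (Matrix.of fun k l : Fin (n+1) =>
        A (Fin.rev ((Fin.rev m).succAbove k)) (j.succAbove l)) := by
    rw [Matrix.det_succ_row_zero]
    refine Finset.sum_congr rfl fun j _ => ?_
    have h0 : D 0 j = A i j := by simp [hD]
    have hsub : D.submatrix Fin.succ j.succAbove =
        Matrix.of fun k l : Fin (n+1) => A (Fin.rev ((Fin.rev m).succAbove k)) (j.succAbove l) := by
      ext k l; simp [hD]
    rw [h0, hsub]
  rw [← hexp]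
  by_cases him : i = m
  · subst him
    rw [if_pos rfl]
    have hDB : D = B.submatrix ((Fin.rev i).cycleRange.symm : Equiv.Perm (Fin (n+2))) id := by
      ext k l
      refine Fin.cases ?_ (fun k' => ?_) k
      · simp [hD, hB]
      · simp [hD, hB]
    rw [hDB, Matrix.det_permute, Equiv.Perm.sign_symm, Fin.sign_cycleRange]
    norm_num
  · rw [if_neg him]
    obtain ⟨k, hk⟩ := Fin.exists_succAbove_eq
      (show Fin.rev i ≠ Fin.rev m from fun hc => him (Fin.rev_injective hc))
    refine Matrix.det_zero_of_row_eq (i := 0) (j := k.succ) (Fin.succ_ne_zero k).symm ?_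
    funext l
    simp [hD, hk]

/-- `dP(v*h) ∧ p̄(v) = p N⁻¹ P(v*h) dp̄(v)` : for `P` a homogeneous polynomial
of degree `p` on row vectors, every `v`, Hermitian `h`, and Hermitian `H_0,…,H_{N−1}`,
`Σ_j (−1)^j ∂_t|_{t=0}[P(v*(h+tH_j))] · pbar(v,h)(H_0,…,Ĥ_j,…,H_{N−1})
  = (p/N) P(v*h) dpbar(v)(H_0,…,H_{N−1})`. -/
theorem dP_wedge_pbar {n : ℕ} (p : ℕ)
    (P : MvPolynomial (Fin (n + 2)) ℂ) (hP : P.IsHomogeneous p)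
    (v : Fin (n + 2) → ℂ)
    (h : Matrix (Fin (n + 2)) (Fin (n + 2)) ℂ) (hh : h.IsHermitian)
    (H : Fin (n + 2) → Matrix (Fin (n + 2)) (Fin (n + 2)) ℂ)
    (hH : ∀ j, (H j).IsHermitian) :
    ∑ j : Fin (n + 2), (-1 : ℂ) ^ (j : ℕ) *
        deriv (fun t : ℝ => MvPolynomial.eval (vstarM v (h + (t : ℂ) • H j)) P) 0 *
        pbar v h (fun k => H (j.succAbove k))
      = ((p : ℂ) / (n + 2)) * MvPolynomial.eval (vstarM v h) P * dpbar v H := by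
  -- notation

  let a : Fin (n+2) → ℂ := vstarM v h
  let A : Fin (n+2) → Fin (n+2) → ℂ := fun i j => vstarM v (H j) i
  let e : Fin (n+2) → ℂ := fun i => MvPolynomial.eval a (MvPolynomial.pderiv i P)
  let s : ℂ := (-1 : ℂ) ^ ((n + 2) * (n + 1) / 2)
  let dM : Fin (n+2) → Fin (n+2) → ℂ := fun m j =>
    Matrix.det (Matrix.of fun k l : Fin (n+1) =>
      A (Fin.rev ((Fin.rev m).succAbove k)) (j.succAbove l))
  let Bdet : ℂ := Matrix.det (Matrix.of fun k l : Fin (n+2) => A (Fin.rev k) l)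
  -- the derivative
  have hvs : ∀ (j : Fin (n+2)) (t : ℝ),
      vstarM v (h + (t:ℂ) • H j) = fun i => a i + (t:ℂ) * A i j := by
    intro j t; funext i
    simp only [vstarM, Matrix.add_apply, Matrix.smul_apply, smul_eq_mul, mul_add,
      Finset.sum_add_distrib, Finset.mul_sum, a, A]
    congr 1
    exact Finset.sum_congr rfl fun k _ => by ring
  have hderiv : ∀ j : Fin (n+2),
      deriv (fun t : ℝ => MvPolynomial.eval (vstarM v (h + (t : ℂ) • H j)) P) 0
        = ∑ i, A i j * e i := by
    intro j
    have h1 : (fun t : ℝ => MvPolynomial.eval (vstarM v (h + (t : ℂ) • H j)) P)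
        = fun t : ℝ => MvPolynomial.eval (fun i => a i + (t:ℂ) * A i j) P := by
      funext t; rw [hvs]
    rw [h1, (hasDerivAt_eval_line a (fun i => A i j) P).deriv]
  have hpbar : ∀ j : Fin (n+2), pbar v h (fun k => H (j.succAbove k))
      = 2 * s * ∑ m : Fin (n+2), (-1:ℂ)^(m:ℕ) * a m * dM m j := fun j => rfl
  have hdpbar : dpbar v H = 2 * ((n:ℂ) + 2) * ((-1:ℂ)^((n + 4) * (n + 1) / 2)) * Bdet := by
    simp [dpbar, Bdet, A]
  simp only [hderiv, hpbar]
  -- rearrange the triple sum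
  have swap : ∀ (F : Fin (n+2) → Fin (n+2) → Fin (n+2) → ℂ),
      ∑ j, ∑ i, ∑ m, F j i m = ∑ i, ∑ m, ∑ j, F j i m := by
    intro F
    rw [Finset.sum_comm]
    exact Finset.sum_congr rfl fun i _ => Finset.sum_comm
  have hstep1 : ∑ j : Fin (n+2), (-1:ℂ)^(j:ℕ) * (∑ i, A i j * e i) *
        (2 * s * ∑ m : Fin (n+2), (-1:ℂ)^(m:ℕ) * a m * dM m j)
      = ∑ j : Fin (n+2), ∑ i, ∑ m, (2 * s * (e i * a m * (-1:ℂ)^(m:ℕ))) *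
          ((-1:ℂ)^(j:ℕ) * A i j * dM m j) := by
    refine Finset.sum_congr rfl fun j _ => ?_
    simp only [Finset.sum_mul, Finset.mul_sum]
    rw [Finset.sum_comm]
    exact Finset.sum_congr rfl fun i _ => Finset.sum_congr rfl fun m _ => by ring
  rw [hstep1, swap]
  have hstep2 : ∀ i : Fin (n+2), ∑ m : Fin (n+2), ∑ j : Fin (n+2),
        (2 * s * (e i * a m * (-1:ℂ)^(m:ℕ))) * ((-1:ℂ)^(j:ℕ) * A i j * dM m j)
      = 2 * s * (-1:ℂ)^(n+1) * Bdet * (a i * e i) := by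
    intro i
    have : ∀ m : Fin (n+2), ∑ j : Fin (n+2),
        (2 * s * (e i * a m * (-1:ℂ)^(m:ℕ))) * ((-1:ℂ)^(j:ℕ) * A i j * dM m j)
        = (2 * s * (e i * a m * (-1:ℂ)^(m:ℕ))) *
          (if i = m then (-1:ℂ)^((Fin.rev m : ℕ)) * Bdet else 0) := by
      intro m
      rw [← Finset.mul_sum]
      congr 1
      exact key_det (Matrix.of A) i m
    simp only [this, mul_ite, mul_zero, Finset.sum_ite_eq, Finset.mem_univ, if_true]
    have hrev : ((i:ℕ)) + ((Fin.rev i : ℕ)) = n + 1 := by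
      rw [Fin.val_rev]; omega
    have hpow : (-1:ℂ)^(i:ℕ) * (-1:ℂ)^((Fin.rev i : ℕ)) = (-1:ℂ)^(n+1) := by
      rw [← pow_add, hrev]
    calc 2 * s * (e i * a i * (-1:ℂ)^(i:ℕ)) * ((-1:ℂ)^((Fin.rev i : ℕ)) * Bdet)
        = 2 * s * ((-1:ℂ)^(i:ℕ) * (-1:ℂ)^((Fin.rev i : ℕ))) * Bdet * (a i * e i) := by ring
      _ = 2 * s * (-1:ℂ)^(n+1) * Bdet * (a i * e i) := by rw [hpow]
  simp only [hstep2]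
  rw [← Finset.mul_sum]
  have heuler : ∑ i, a i * e i = (p : ℂ) * MvPolynomial.eval a P := euler_eval P hP a
  rw [heuler, hdpbar]
  have hsgn : (-1:ℂ)^((n+4)*(n+1)/2) = s * (-1:ℂ)^(n+1) := by
    have h2 : (n+4)*(n+1)/2 = (n+2)*(n+1)/2 + (n+1) := by
      have h3 : (n+4)*(n+1) = (n+2)*(n+1) + (n+1)*2 := by ring
      rw [h3, Nat.add_mul_div_right _ _ (by norm_num)]
    rw [h2, pow_add]
  rw [hsgn]
  have hne : ((n:ℂ) + 2) ≠ 0 := by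
    have : ((n:ℂ) + 2) = ((n + 2 : ℕ) : ℂ) := by push_cast; ring
    rw [this]
    exact Nat.cast_ne_zero.mpr (by omega)
  field_simp
  ring

end
end

section
/- Let v ∈ ℂ^N with v ≠ 0, let h be a positive-definite Hermitian N×N matrix, let P: ℂ^{1×N} → ℂ be a homogeneous polynomial function of degree p on row vectors, and let s ∈ ℂ. Then for all Hermitian N×N matrices H_0, …, H_{N−1}: Σ_{j=0}^{N−1} (−1)^j · (d/dt at t = 0 of [ (v*(h+tH_j)v)^{−s/2−N−p} · P(v*(h+tH_j)) · pbar(v, h+tH_j)(H_0, …, H_{j−1}, H_{j+1}, …, H_{N−1}) ]) = −(s/(2N)) · (v*hv)^{−s/2−N−p} · P(v*h) · dpbar(v)(H_0, …, H_{N−1}). (Multiplying both sides by Γ(N+p+s/2)/2 and by conj(Q(v)) for a polynomial Q gives the paper's formula dη(v, P⊗conj(Q), s) = c(s)(v*hv)^{−s/2−N−p} conj(Q(v)) P(v*h) dp̄(v) with c(s) = (−4N)^{−1} s Γ(N+p+s/2).) -/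
open Matrix BigOperators

noncomputable section

namespace DEtaAux

lemma cofactor {N : ℕ} (M : Matrix (Fin (N + 1)) (Fin (N + 1)) ℂ) (r k0 : Fin (N + 1)) :
    ∑ j : Fin (N + 1), (-1 : ℂ) ^ ((k0 : ℕ) + (j : ℕ)) * M r j *
        (M.submatrix k0.succAbove j.succAbove).det
      = if r = k0 then M.det else 0 := by
  have hsub : ∀ j : Fin (N + 1),
      (M.updateRow k0 (M r)).submatrix k0.succAbove j.succAbove
        = M.submatrix k0.succAbove j.succAbove := by
    intro j; ext a b
    simp [Matrix.submatrix_apply, Matrix.updateRow_ne (Fin.succAbove_ne k0 a)]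
  have h := Matrix.det_succ_row (M.updateRow k0 (M r)) k0
  simp only [hsub, Matrix.updateRow_self] at h
  by_cases hr : r = k0
  · subst hr
    rw [Matrix.updateRow_eq_self] at h
    rw [if_pos rfl, ← h]
  · rw [if_neg hr]
    have h0 : (M.updateRow k0 (M r)).det = 0 :=
      Matrix.det_zero_of_row_eq hr (by rw [Matrix.updateRow_ne hr, Matrix.updateRow_self])
    rw [h0] at h
    exact h.symm

variable {n : ℕ} (v : Fin (n + 2) → ℂ) (H : Fin (n + 2) → Matrix (Fin (n + 2)) (Fin (n + 2)) ℂ)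

/-- The big matrix. -/
def Mf (v : Fin (n + 2) → ℂ) (H : Fin (n + 2) → Matrix (Fin (n + 2)) (Fin (n + 2)) ℂ) :
    Matrix (Fin (n + 2)) (Fin (n + 2)) ℂ :=
  Matrix.of fun k l : Fin (n + 2) => vstarM v (H l) (Fin.rev k)

/-- The minor appearing in `pbar`. -/
def Dm (v : Fin (n + 2) → ℂ) (H : Fin (n + 2) → Matrix (Fin (n + 2)) (Fin (n + 2)) ℂ)
    (i j : Fin (n + 2)) : ℂ :=
  (Matrix.of fun k l : Fin (n + 1) =>
    vstarM v (H (j.succAbove l)) (Fin.rev ((Fin.rev i).succAbove k))).det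

lemma key (i m : Fin (n + 2)) :
    ∑ j : Fin (n + 2), (-1 : ℂ) ^ (j : ℕ) * vstarM v (H j) m * Dm v H i j
      = if m = i then (-1 : ℂ) ^ ((Fin.rev i : ℕ)) * (Mf v H).det else 0 := by
  have hentry : ∀ j, (Mf v H) (Fin.rev m) j = vstarM v (H j) m := by
    intro j; simp [Mf]
  have hsub : ∀ j : Fin (n + 2),
      ((Mf v H).submatrix (Fin.rev i).succAbove j.succAbove).det = Dm v H i j := by
    intro j; congr 1
  have hc := cofactor (Mf v H) (Fin.rev m) (Fin.rev i)
  simp only [hentry, hsub] at hc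
  have hif : (if Fin.rev m = Fin.rev i then (Mf v H).det else 0)
      = (if m = i then (Mf v H).det else 0) := by
    simp [Fin.rev_inj]
  rw [hif] at hc
  have expand : ∑ j : Fin (n + 2), (-1 : ℂ) ^ (j : ℕ) * vstarM v (H j) m * Dm v H i j
      = (-1 : ℂ) ^ ((Fin.rev i : ℕ)) *
        ∑ j : Fin (n + 2), (-1 : ℂ) ^ ((Fin.rev i : ℕ) + (j : ℕ)) * vstarM v (H j) m
          * Dm v H i j := by
    rw [Finset.mul_sum]
    refine Finset.sum_congr rfl fun j _ => ?_
    have h1 : (-1 : ℂ) ^ ((Fin.rev i : ℕ)) * (-1 : ℂ) ^ ((Fin.rev i : ℕ)) = 1 := by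
      rw [← pow_add]
      exact Even.neg_one_pow ⟨(Fin.rev i : ℕ), rfl⟩
    rw [pow_add, ← mul_assoc, ← mul_assoc, ← mul_assoc, h1, one_mul]
  rw [expand, hc]
  split_ifs <;> simp

lemma rev_add (i : Fin (n + 2)) : ((i : ℕ) + (Fin.rev i : ℕ)) = n + 1 := by
  have := i.isLt
  simp only [Fin.val_rev]
  omega

lemma sign_rev (i : Fin (n + 2)) :
    (-1 : ℂ) ^ (i : ℕ) * (-1 : ℂ) ^ ((Fin.rev i : ℕ)) = (-1 : ℂ) ^ (n + 1) := by
  rw [← pow_add, rev_add]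

lemma sumI :
    ∑ j : Fin (n + 2), (-1 : ℂ) ^ (j : ℕ) *
        (∑ i : Fin (n + 2), (-1 : ℂ) ^ (i : ℕ) * vstarM v (H j) i * Dm v H i j)
      = (n + 2 : ℂ) * (-1 : ℂ) ^ (n + 1) * (Mf v H).det := by
  have step : ∀ j : Fin (n + 2), (-1 : ℂ) ^ (j : ℕ) *
      (∑ i : Fin (n + 2), (-1 : ℂ) ^ (i : ℕ) * vstarM v (H j) i * Dm v H i j)
      = ∑ i : Fin (n + 2), (-1 : ℂ) ^ (i : ℕ) *
          ((-1 : ℂ) ^ (j : ℕ) * vstarM v (H j) i * Dm v H i j) := by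
    intro j
    rw [Finset.mul_sum]
    exact Finset.sum_congr rfl fun i _ => by ring
  calc
    ∑ j : Fin (n + 2), (-1 : ℂ) ^ (j : ℕ) *
        (∑ i : Fin (n + 2), (-1 : ℂ) ^ (i : ℕ) * vstarM v (H j) i * Dm v H i j)
      = ∑ j : Fin (n + 2), ∑ i : Fin (n + 2), (-1 : ℂ) ^ (i : ℕ) *
          ((-1 : ℂ) ^ (j : ℕ) * vstarM v (H j) i * Dm v H i j) :=
        Finset.sum_congr rfl fun j _ => step j
    _ = ∑ i : Fin (n + 2), (-1 : ℂ) ^ (i : ℕ) *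
          ∑ j : Fin (n + 2), (-1 : ℂ) ^ (j : ℕ) * vstarM v (H j) i * Dm v H i j := by
        rw [Finset.sum_comm]
        exact Finset.sum_congr rfl fun i _ => (Finset.mul_sum _ _ _).symm
    _ = ∑ i : Fin (n + 2), (-1 : ℂ) ^ (n + 1) * (Mf v H).det := by
        refine Finset.sum_congr rfl fun i _ => ?_
        rw [key, if_pos rfl, ← mul_assoc, sign_rev]
    _ = (n + 2 : ℂ) * (-1 : ℂ) ^ (n + 1) * (Mf v H).det := by
        rw [Finset.sum_const, Finset.card_univ, Fintype.card_fin]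
        push_cast
        ring

lemma sumK (x u : Fin (n + 2) → ℂ) :
    ∑ j : Fin (n + 2), (-1 : ℂ) ^ (j : ℕ) * (∑ m, u m * vstarM v (H j) m) *
        (∑ i : Fin (n + 2), (-1 : ℂ) ^ (i : ℕ) * x i * Dm v H i j)
      = (-1 : ℂ) ^ (n + 1) * (∑ i, x i * u i) * (Mf v H).det := by
  have step : ∀ j : Fin (n + 2), (-1 : ℂ) ^ (j : ℕ) * (∑ m, u m * vstarM v (H j) m) *
      (∑ i : Fin (n + 2), (-1 : ℂ) ^ (i : ℕ) * x i * Dm v H i j)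
      = ∑ i : Fin (n + 2), ∑ m : Fin (n + 2), ((-1 : ℂ) ^ (i : ℕ) * x i * u m) *
          ((-1 : ℂ) ^ (j : ℕ) * vstarM v (H j) m * Dm v H i j) := by
    intro j
    simp only [Finset.mul_sum, Finset.sum_mul]
    refine Finset.sum_congr rfl fun i _ => Finset.sum_congr rfl fun m _ => by ring
  calc
    ∑ j : Fin (n + 2), (-1 : ℂ) ^ (j : ℕ) * (∑ m, u m * vstarM v (H j) m) *
        (∑ i : Fin (n + 2), (-1 : ℂ) ^ (i : ℕ) * x i * Dm v H i j)
      = ∑ j : Fin (n + 2), ∑ i : Fin (n + 2), ∑ m : Fin (n + 2),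
          ((-1 : ℂ) ^ (i : ℕ) * x i * u m) *
            ((-1 : ℂ) ^ (j : ℕ) * vstarM v (H j) m * Dm v H i j) :=
        Finset.sum_congr rfl fun j _ => step j
    _ = ∑ i : Fin (n + 2), ∑ m : Fin (n + 2), ((-1 : ℂ) ^ (i : ℕ) * x i * u m) *
          (∑ j : Fin (n + 2), (-1 : ℂ) ^ (j : ℕ) * vstarM v (H j) m * Dm v H i j) := by
        rw [Finset.sum_comm]
        refine Finset.sum_congr rfl fun i _ => ?_
        rw [Finset.sum_comm]
        exact Finset.sum_congr rfl fun m _ => (Finset.mul_sum _ _ _).symm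
    _ = ∑ i : Fin (n + 2), ((-1 : ℂ) ^ (i : ℕ) * x i * u i) *
          ((-1 : ℂ) ^ ((Fin.rev i : ℕ)) * (Mf v H).det) := by
        refine Finset.sum_congr rfl fun i _ => ?_
        simp only [key, mul_ite, mul_zero]
        rw [Finset.sum_ite_eq' Finset.univ i]
        simp
    _ = (-1 : ℂ) ^ (n + 1) * (∑ i, x i * u i) * (Mf v H).det := by
        rw [Finset.mul_sum, Finset.sum_mul]
        refine Finset.sum_congr rfl fun m _ => ?_
        have hs := sign_rev (n := n) m
        calc (-1 : ℂ) ^ (m : ℕ) * x m * u m * ((-1 : ℂ) ^ ((Fin.rev m : ℕ)) * (Mf v H).det)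
            = ((-1 : ℂ) ^ (m : ℕ) * (-1 : ℂ) ^ ((Fin.rev m : ℕ))) * (x m * u m) *
              (Mf v H).det := by ring
          _ = (-1 : ℂ) ^ (n + 1) * (x m * u m) * (Mf v H).det := by rw [hs]

lemma neg_one_pow_shift (n : ℕ) :
    (-1 : ℂ) ^ ((n + 4) * (n + 1) / 2) = (-1 : ℂ) ^ ((n + 2) * (n + 1) / 2) * (-1 : ℂ) ^ (n + 1) := by
  obtain ⟨k, hk⟩ := Nat.even_mul_succ_self (n + 1)
  set a := (n + 2) * (n + 1) with ha
  set b := (n + 4) * (n + 1) with hb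
  have h4 : a = k + k := by rw [ha, ← hk]; ring
  have h3 : b = a + 2 * (n + 1) := by rw [ha, hb]; ring
  have hdiv : b / 2 = a / 2 + (n + 1) := by omega
  rw [hdiv, pow_add]

lemma dpbar_eq : dpbar v H
    = (n + 2 : ℂ) * (2 * (-1 : ℂ) ^ ((n + 2) * (n + 1) / 2) * (-1 : ℂ) ^ (n + 1) * (Mf v H).det) := by
  have : dpbar v H = 2 * (n + 2 : ℂ) * (-1 : ℂ) ^ ((n + 4) * (n + 1) / 2) * (Mf v H).det := rfl
  rw [this, neg_one_pow_shift]
  ring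

lemma pbar_expand (g : Matrix (Fin (n + 2)) (Fin (n + 2)) ℂ) (j : Fin (n + 2)) :
    pbar v g (fun k => H (j.succAbove k))
      = 2 * (-1 : ℂ) ^ ((n + 2) * (n + 1) / 2) *
          ∑ i : Fin (n + 2), (-1 : ℂ) ^ (i : ℕ) * vstarM v g i * Dm v H i j := rfl

lemma S3 : ∑ j : Fin (n + 2), (-1 : ℂ) ^ (j : ℕ) * pbar v (H j) (fun k => H (j.succAbove k))
    = dpbar v H := by
  calc
    ∑ j : Fin (n + 2), (-1 : ℂ) ^ (j : ℕ) * pbar v (H j) (fun k => H (j.succAbove k))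
      = 2 * (-1 : ℂ) ^ ((n + 2) * (n + 1) / 2) *
          ∑ j : Fin (n + 2), (-1 : ℂ) ^ (j : ℕ) *
            (∑ i : Fin (n + 2), (-1 : ℂ) ^ (i : ℕ) * vstarM v (H j) i * Dm v H i j) := by
        rw [Finset.mul_sum]
        refine Finset.sum_congr rfl fun j _ => ?_
        rw [pbar_expand]
        ring
    _ = 2 * (-1 : ℂ) ^ ((n + 2) * (n + 1) / 2) *
          ((n + 2 : ℂ) * (-1 : ℂ) ^ (n + 1) * (Mf v H).det) := by rw [sumI]
    _ = dpbar v H := by rw [dpbar_eq]; ring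

lemma SK (u : Fin (n + 2) → ℂ) (g : Matrix (Fin (n + 2)) (Fin (n + 2)) ℂ) :
    ∑ j : Fin (n + 2), (-1 : ℂ) ^ (j : ℕ) * (∑ m, u m * vstarM v (H j) m) *
        pbar v g (fun k => H (j.succAbove k))
      = (∑ i, vstarM v g i * u i) *
          (2 * (-1 : ℂ) ^ ((n + 2) * (n + 1) / 2) * (-1 : ℂ) ^ (n + 1) * (Mf v H).det) := by
  calc
    ∑ j : Fin (n + 2), (-1 : ℂ) ^ (j : ℕ) * (∑ m, u m * vstarM v (H j) m) *
        pbar v g (fun k => H (j.succAbove k))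
      = 2 * (-1 : ℂ) ^ ((n + 2) * (n + 1) / 2) *
          ∑ j : Fin (n + 2), (-1 : ℂ) ^ (j : ℕ) * (∑ m, u m * vstarM v (H j) m) *
            (∑ i : Fin (n + 2), (-1 : ℂ) ^ (i : ℕ) * vstarM v g i * Dm v H i j) := by
        rw [Finset.mul_sum]
        refine Finset.sum_congr rfl fun j _ => ?_
        rw [pbar_expand]
        ring
    _ = 2 * (-1 : ℂ) ^ ((n + 2) * (n + 1) / 2) *
          ((-1 : ℂ) ^ (n + 1) * (∑ i, vstarM v g i * u i) * (Mf v H).det) := by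
        rw [sumK]
    _ = _ := by ring

lemma eval_smul_of_isHomogeneous {N q : ℕ} {P : MvPolynomial (Fin N) ℂ}
    (hP : P.IsHomogeneous q) (c : ℂ) (x : Fin N → ℂ) :
    MvPolynomial.eval (c • x) P = c ^ q * MvPolynomial.eval x P := by
  rw [MvPolynomial.eval_eq', MvPolynomial.eval_eq', Finset.mul_sum]
  refine Finset.sum_congr rfl fun d hd => ?_
  have hdeg : ∑ i, d i = q := by
    have hw := hP (MvPolynomial.mem_support_iff.mp hd)
    rw [← hw, Finsupp.weight_apply, Finsupp.sum_fintype]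
    · simp
    · intro i; simp
  calc
    MvPolynomial.coeff d P * ∏ i, (c • x) i ^ d i
      = MvPolynomial.coeff d P * ((∏ i, c ^ d i) * ∏ i, x i ^ d i) := by
        rw [← Finset.prod_mul_distrib]
        simp [mul_pow]
    _ = c ^ q * (MvPolynomial.coeff d P * ∏ i, x i ^ d i) := by
        rw [Finset.prod_pow_eq_pow_sum, hdeg]
        ring

lemma vhv_eq_dot {N : ℕ} (v : Fin N → ℂ) (h : Matrix (Fin N) (Fin N) ℂ) :
    vhv v h = star v ⬝ᵥ h *ᵥ v := by
  simp only [vhv, vstarM, dotProduct, Matrix.mulVec, dotProduct, Pi.star_apply, Finset.sum_mul,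
    Finset.mul_sum]
  rw [Finset.sum_comm]
  refine Finset.sum_congr rfl fun j _ => Finset.sum_congr rfl fun i _ => ?_
  simp only [RCLike.star_def]
  ring

lemma vstarM_add_smul {N : ℕ} (v : Fin N → ℂ) (h H : Matrix (Fin N) (Fin N) ℂ) (t : ℝ) :
    vstarM v (h + (t : ℂ) • H) = fun i => vstarM v h i + (t : ℂ) * vstarM v H i := by
  funext i
  simp only [vstarM, Matrix.add_apply, Matrix.smul_apply, smul_eq_mul, mul_add,
    Finset.sum_add_distrib, Finset.mul_sum]
  congr 1
  exact Finset.sum_congr rfl fun j _ => by ring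

lemma vhv_add_smul {N : ℕ} (v : Fin N → ℂ) (h H : Matrix (Fin N) (Fin N) ℂ) (t : ℝ) :
    vhv v (h + (t : ℂ) • H) = vhv v h + (t : ℂ) * vhv v H := by
  simp only [vhv, vstarM_add_smul, add_mul, Finset.sum_add_distrib, Finset.mul_sum]
  congr 1
  exact Finset.sum_congr rfl fun i _ => by ring

lemma sum_affine {N : ℕ} (a b d : Fin N → ℂ) (c t : ℂ) :
    c * ∑ i : Fin N, (-1 : ℂ) ^ (i : ℕ) * (a i + t * b i) * d i
      = c * (∑ i : Fin N, (-1 : ℂ) ^ (i : ℕ) * a i * d i)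
        + t * (c * ∑ i : Fin N, (-1 : ℂ) ^ (i : ℕ) * b i * d i) := by
  simp only [Finset.mul_sum, ← Finset.sum_add_distrib]
  exact Finset.sum_congr rfl fun i _ => by ring

lemma pbar_add_smul {n : ℕ} (v : Fin (n + 2) → ℂ) (h H' : Matrix (Fin (n + 2)) (Fin (n + 2)) ℂ)
    (t : ℝ) (K : Fin (n + 1) → Matrix (Fin (n + 2)) (Fin (n + 2)) ℂ) :
    pbar v (h + (t : ℂ) • H') K = pbar v h K + (t : ℂ) * pbar v H' K := by
  unfold pbar
  have := vstarM_add_smul v h H' t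
  simp only [this]
  exact DEtaAux.sum_affine _ _ _ _ _


end DEtaAux

open scoped ComplexOrder

/-- `dη(v, P⊗conj(Q), s) = c(s)(v*hv)^{−s/2−N−p} conj(Q(v)) P(v*h) dp̄(v)`,
in the normalized form: for `v ≠ 0`, `h` positive definite Hermitian, `P` homogeneous of
degree `p` on row vectors, `s ∈ ℂ`, and Hermitian `H_0,…,H_{N−1}`,
`Σ_j (−1)^j ∂_t|_{t=0}[ (v*(h+tH_j)v)^{−s/2−N−p} P(v*(h+tH_j))
    pbar(v,h+tH_j)(H_0,…,Ĥ_j,…,H_{N−1}) ]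
  = −(s/(2N)) (v*hv)^{−s/2−N−p} P(v*h) dpbar(v)(H_0,…,H_{N−1})`
(here `c^w = exp(w log c)` is the complex power). -/
theorem d_eta_explicit {n : ℕ} (p : ℕ) (v : Fin (n + 2) → ℂ) (hv : v ≠ 0)
    (h : Matrix (Fin (n + 2)) (Fin (n + 2)) ℂ) (hh : h.PosDef)
    (P : MvPolynomial (Fin (n + 2)) ℂ) (hP : P.IsHomogeneous p)
    (s : ℂ)
    (H : Fin (n + 2) → Matrix (Fin (n + 2)) (Fin (n + 2)) ℂ)
    (hH : ∀ j, (H j).IsHermitian) :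
    ∑ j : Fin (n + 2), (-1 : ℂ) ^ (j : ℕ) *
        deriv (fun t : ℝ =>
          (vhv v (h + (t : ℂ) • H j)) ^ (-(s / 2) - (n + 2 : ℂ) - (p : ℂ)) *
            MvPolynomial.eval (vstarM v (h + (t : ℂ) • H j)) P *
            pbar v (h + (t : ℂ) • H j) (fun k => H (j.succAbove k))) 0
      = -(s / (2 * (n + 2 : ℂ))) * (vhv v h) ^ (-(s / 2) - (n + 2 : ℂ) - (p : ℂ)) *
          MvPolynomial.eval (vstarM v h) P * dpbar v H := by
  classical
  set w : ℂ := -(s / 2) - (n + 2 : ℂ) - (p : ℂ) with hw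
  set x : Fin (n + 2) → ℂ := vstarM v h with hx
  set A : ℂ := vhv v h with hA
  set B : ℂ := MvPolynomial.eval x P with hB
  have hApos : 0 < A := by
    rw [hA, DEtaAux.vhv_eq_dot]
    exact hh.dotProduct_mulVec_pos hv
  have hA0 : A ≠ 0 := hApos.ne'
  have hslit : A ∈ Complex.slitPlane := by
    refine Complex.mem_slitPlane_iff.mpr (Or.inl ?_)
    have := (Complex.lt_def.mp hApos).1
    simpa using this
  -- the polynomial map and its derivative
  have hPdiff : DifferentiableAt ℂ (fun z : Fin (n + 2) → ℂ => MvPolynomial.eval z P) x :=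
    ((AnalyticOnNhd.eval_mvPolynomial (𝕜 := ℂ) P) x (Set.mem_univ x)).differentiableAt
  set L := fderiv ℂ (fun z : Fin (n + 2) → ℂ => MvPolynomial.eval z P) x with hLdef
  have hL : HasFDerivAt (fun z : Fin (n + 2) → ℂ => MvPolynomial.eval z P) L x :=
    hPdiff.hasFDerivAt
  set u : Fin (n + 2) → ℂ := fun m => L (Pi.single m 1) with hu
  have hlin : ∀ y : Fin (n + 2) → ℂ, L y = ∑ m, y m * u m := by
    intro y
    have hy : y = ∑ m : Fin (n + 2), y m • (Pi.single m (1 : ℂ) : Fin (n + 2) → ℂ) := by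
      funext i
      simp [Finset.sum_apply, Pi.single_apply]
    conv_lhs => rw [hy]
    rw [map_sum]
    simp [hu]
  have hEuler : ∑ m, x m * u m = (p : ℂ) * B := by
    rw [← hlin x]
    have hs1 : HasDerivAt (fun c : ℂ => c • x) x 1 := by
      simpa using (hasDerivAt_id (1 : ℂ)).smul_const x
    have h1 : HasDerivAt (fun c : ℂ => MvPolynomial.eval (c • x) P) (L x) 1 := by
      have := hL.comp_hasDerivAt_of_eq 1 hs1 (one_smul ℂ x).symm
      exact this
    have h2 : HasDerivAt (fun c : ℂ => c ^ p * B) ((p : ℂ) * B) 1 := by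
      simpa using (hasDerivAt_pow p (1 : ℂ)).mul_const B
    have heq : (fun c : ℂ => MvPolynomial.eval (c • x) P) = fun c : ℂ => c ^ p * B :=
      funext fun c => by rw [DEtaAux.eval_smul_of_isHomogeneous hP, hB]
    rw [heq] at h1
    exact h1.unique h2
  -- derivative of each summand
  have hderiv : ∀ j : Fin (n + 2),
      deriv (fun t : ℝ =>
          (vhv v (h + (t : ℂ) • H j)) ^ w *
            MvPolynomial.eval (vstarM v (h + (t : ℂ) • H j)) P *
            pbar v (h + (t : ℂ) • H j) (fun k => H (j.succAbove k))) 0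
      = (w * A ^ (w - 1) * vhv v (H j) * B + A ^ w * L (vstarM v (H j))) *
          pbar v h (fun k => H (j.succAbove k))
        + A ^ w * B * pbar v (H j) (fun k => H (j.succAbove k)) := by
    intro j
    have hone : HasDerivAt (fun t : ℝ => ((t : ℝ) : ℂ)) 1 (0 : ℝ) :=
      (hasDerivAt_id (0 : ℝ)).ofReal_comp
    have hg1 : HasDerivAt (fun t : ℝ => A + (t : ℂ) * vhv v (H j)) (vhv v (H j)) 0 := by
      simpa using (hone.mul_const (vhv v (H j))).const_add A
    have hd1 : HasDerivAt (fun t : ℝ => (A + (t : ℂ) * vhv v (H j)) ^ w)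
        (w * A ^ (w - 1) * vhv v (H j)) 0 := by
      have hcp : HasDerivAt (fun z : ℂ => z ^ w) (w * A ^ (w - 1)) A :=
        (Complex.hasStrictDerivAt_cpow_const hslit).hasDerivAt
      have h2 := (hcp.hasFDerivAt.restrictScalars ℝ).comp_hasDerivAt_of_eq 0 hg1 (by simp)
      exact h2.congr_deriv (by simp [mul_comm, mul_assoc, mul_left_comm])
    have hgp : HasDerivAt (fun t : ℝ => (fun i => x i + (t : ℂ) * vstarM v (H j) i))
        (vstarM v (H j)) 0 :=
      hasDerivAt_pi.2 fun i => by simpa using (hone.mul_const (vstarM v (H j) i)).const_add (x i)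
    have h0 : (fun i => x i + ((0 : ℝ) : ℂ) * vstarM v (H j) i) = x := by funext i; simp
    have hd2 : HasDerivAt
        (fun t : ℝ => MvPolynomial.eval (fun i => x i + (t : ℂ) * vstarM v (H j) i) P)
        (L (vstarM v (H j))) 0 := by
      have := (hL.restrictScalars ℝ).comp_hasDerivAt_of_eq 0 hgp h0.symm
      exact this
    have hd3 : HasDerivAt (fun t : ℝ =>
        pbar v h (fun k => H (j.succAbove k)) + (t : ℂ) * pbar v (H j) (fun k => H (j.succAbove k)))
        (pbar v (H j) (fun k => H (j.succAbove k))) 0 := by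
      simpa using (hone.mul_const (pbar v (H j) (fun k => H (j.succAbove k)))).const_add
        (pbar v h (fun k => H (j.succAbove k)))
    have hprod := (hd1.mul hd2).mul hd3
    have hfun : (fun t : ℝ =>
          (vhv v (h + (t : ℂ) • H j)) ^ w *
            MvPolynomial.eval (vstarM v (h + (t : ℂ) • H j)) P *
            pbar v (h + (t : ℂ) • H j) (fun k => H (j.succAbove k)))
        = (fun t : ℝ => (A + (t : ℂ) * vhv v (H j)) ^ w *
            MvPolynomial.eval (fun i => x i + (t : ℂ) * vstarM v (H j) i) P *
            (pbar v h (fun k => H (j.succAbove k))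
              + (t : ℂ) * pbar v (H j) (fun k => H (j.succAbove k)))) := by
      funext t
      rw [DEtaAux.vhv_add_smul, DEtaAux.pbar_add_smul, DEtaAux.vstarM_add_smul, ← hA, ← hx]
    rw [hfun]
    refine HasDerivAt.deriv (hprod.congr_deriv ?_)
    rw [h0, ← hB]
    simp
    left; left; rfl
  simp only [hderiv]
  -- reorganize the sum
  set e : ℂ := 2 * (-1 : ℂ) ^ ((n + 2) * (n + 1) / 2) * (-1 : ℂ) ^ (n + 1) * (DEtaAux.Mf v H).det
    with he
  have hS3 : ∑ j : Fin (n + 2), (-1 : ℂ) ^ (j : ℕ) * pbar v (H j) (fun k => H (j.succAbove k))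
      = dpbar v H := DEtaAux.S3 v H
  have hS1 : ∑ j : Fin (n + 2), (-1 : ℂ) ^ (j : ℕ) * vhv v (H j) *
      pbar v h (fun k => H (j.succAbove k)) = A * e := by
    have hrw : ∀ j : Fin (n + 2), vhv v (H j) = ∑ m, v m * vstarM v (H j) m := by
      intro j
      rw [vhv]
      exact Finset.sum_congr rfl fun m _ => by ring
    calc
      ∑ j : Fin (n + 2), (-1 : ℂ) ^ (j : ℕ) * vhv v (H j) *
          pbar v h (fun k => H (j.succAbove k))
        = ∑ j : Fin (n + 2), (-1 : ℂ) ^ (j : ℕ) * (∑ m, v m * vstarM v (H j) m) *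
            pbar v h (fun k => H (j.succAbove k)) :=
          Finset.sum_congr rfl fun j _ => by rw [← hrw j]
      _ = (∑ i, vstarM v h i * v i) *
            (2 * (-1 : ℂ) ^ ((n + 2) * (n + 1) / 2) * (-1 : ℂ) ^ (n + 1) * (DEtaAux.Mf v H).det) :=
          DEtaAux.SK v H v h
      _ = A * e := by rw [← he, hA, vhv]
  have hS2 : ∑ j : Fin (n + 2), (-1 : ℂ) ^ (j : ℕ) * L (vstarM v (H j)) *
      pbar v h (fun k => H (j.succAbove k)) = (p : ℂ) * B * e := by
    have hrw : ∀ j : Fin (n + 2), L (vstarM v (H j)) = ∑ m, u m * vstarM v (H j) m := by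
      intro j
      rw [hlin]
      exact Finset.sum_congr rfl fun m _ => by ring
    calc
      ∑ j : Fin (n + 2), (-1 : ℂ) ^ (j : ℕ) * L (vstarM v (H j)) *
          pbar v h (fun k => H (j.succAbove k))
        = ∑ j : Fin (n + 2), (-1 : ℂ) ^ (j : ℕ) * (∑ m, u m * vstarM v (H j) m) *
            pbar v h (fun k => H (j.succAbove k)) :=
          Finset.sum_congr rfl fun j _ => by rw [← hrw j]
      _ = (∑ i, vstarM v h i * u i) *
            (2 * (-1 : ℂ) ^ ((n + 2) * (n + 1) / 2) * (-1 : ℂ) ^ (n + 1) * (DEtaAux.Mf v H).det) :=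
          DEtaAux.SK v H u h
      _ = (p : ℂ) * B * e := by
          rw [← he, ← hEuler]
  have hsplit : ∑ j : Fin (n + 2), (-1 : ℂ) ^ (j : ℕ) *
      ((w * A ^ (w - 1) * vhv v (H j) * B + A ^ w * L (vstarM v (H j))) *
          pbar v h (fun k => H (j.succAbove k))
        + A ^ w * B * pbar v (H j) (fun k => H (j.succAbove k)))
      = w * A ^ (w - 1) * B *
          (∑ j : Fin (n + 2), (-1 : ℂ) ^ (j : ℕ) * vhv v (H j) *
            pbar v h (fun k => H (j.succAbove k)))
        + A ^ w *
          (∑ j : Fin (n + 2), (-1 : ℂ) ^ (j : ℕ) * L (vstarM v (H j)) *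
            pbar v h (fun k => H (j.succAbove k)))
        + A ^ w * B *
          (∑ j : Fin (n + 2), (-1 : ℂ) ^ (j : ℕ) * pbar v (H j) (fun k => H (j.succAbove k))) := by
    simp only [Finset.mul_sum, ← Finset.sum_add_distrib]
    exact Finset.sum_congr rfl fun j _ => by ring
  rw [hsplit, hS1, hS2, hS3, DEtaAux.dpbar_eq, ← he]
  have hcpow : A ^ (w - 1) * A = A ^ w := by
    rw [Complex.cpow_sub _ _ hA0, Complex.cpow_one, div_mul_cancel₀ _ hA0]
  have hn0 : (n + 2 : ℂ) ≠ 0 := by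
    have h1 : ((n + 2 : ℕ) : ℂ) ≠ 0 := Nat.cast_ne_zero.mpr (by omega)
    push_cast at h1
    exact h1
  have hstep : w * A ^ (w - 1) * B * (A * e) + A ^ w * ((p : ℂ) * B * e)
      + A ^ w * B * ((n + 2 : ℂ) * e)
      = (w + (p : ℂ) + (n + 2 : ℂ)) * (A ^ w * B * e) := by
    have : w * A ^ (w - 1) * B * (A * e) = w * (A ^ (w - 1) * A) * B * e := by ring
    rw [this, hcpow]
    ring
  rw [hstep, hw]
  field_simp
  ring


end
end

section
/- Let k be an imaginary quadratic field with a fixed complex embedding σ: k → ℂ, let 𝔞 be a nonzero fractional ideal of k, let p, q be non-negative integers, let z ∈ ℂ with z ∉ σ(𝔞), and let s ∈ ℂ with Re(s) > 1 + q − p. Then the family (a ∈ 𝔞) ↦ conj(z + σ(a))^q / ( (z + σ(a))^{p+1} · |z + σ(a)|^{s} ) is summable; i.e. the Kronecker–Eisenstein series K^{p,q}(z, 𝔞, s) = (p!/2) Σ'_{a ∈ σ(𝔞)} conj(z+a)^q / ((z+a)^{p+1} |z+a|^{s}) converges absolutely for Re(s) > 1 + q − p. -/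
open NumberField BigOperators

noncomputable section

/-- norm of a single Kronecker–Eisenstein summand -/
lemma ke_norm_term (w : ℂ) (hw : w ≠ 0) (p q : ℕ) (s : ℂ) :
    ‖(starRingEnd ℂ) w ^ q / (w ^ (p + 1) * ((‖w‖ : ℂ)) ^ s)‖
      = ‖w‖ ^ (-(((p : ℝ) + 1) - (q : ℝ) + s.re)) := by
  have habs : 0 < ‖w‖ := norm_pos_iff.mpr hw
  rw [norm_div, norm_pow, norm_mul, norm_pow,
    Complex.norm_conj, Complex.norm_cpow_eq_rpow_re_of_pos habs,
    ← Real.rpow_natCast (‖w‖) q, ← Real.rpow_natCast (‖w‖) (p + 1),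
    ← Real.rpow_add habs, ← Real.rpow_sub habs]
  congr 1
  push_cast
  ring

lemma ke_det_ne_zero (k : Type*) [Field k] [NumberField k]
    (σ : k →+* ℂ) (him : ∃ x : k, (σ x).im ≠ 0) (b : Module.Basis (Fin 2) ℚ k) :
    ((starRingEnd ℂ) (σ (b 0)) * σ (b 1)).im ≠ 0 := by
  intro hD
  obtain ⟨x, hx⟩ := him
  set A := σ (b 0) with hA
  have hσq : ∀ (r : ℚ) (y : k), σ (r • y) = (r : ℂ) * σ y := by
    intro r y
    rw [Rat.smul_def, map_mul, map_ratCast]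
  have key : ∀ y : k, ((starRingEnd ℂ) A * σ y).im = 0 := by
    intro y
    conv_lhs => rw [← b.sum_repr y]
    rw [map_sum]
    simp only [hσq]
    rw [Finset.mul_sum, Complex.im_sum, Fin.sum_univ_two]
    have h0 : ((starRingEnd ℂ) A * A).im = 0 := by
      rw [Complex.conj_mul', ← Complex.ofReal_pow]
      exact Complex.ofReal_im _
    simp only [mul_comm ((starRingEnd ℂ) A), mul_assoc]
    rw [mul_comm (σ (b 0)) ((starRingEnd ℂ) A), mul_comm (σ (b 1)) ((starRingEnd ℂ) A)]
    simp [Complex.mul_im, h0, hD]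
    right
    rw [← hA]
    ring
  have hA0 : A ≠ 0 := by
    simp only [hA, ne_eq, map_eq_zero]
    exact b.ne_zero 0
  have hAim : A.im = 0 := by
    have := key 1
    simpa using this
  have hAre : A.re ≠ 0 := by
    intro h
    exact hA0 (Complex.ext h hAim)
  have := key x
  rw [Complex.mul_im] at this
  simp only [Complex.conj_re, Complex.conj_im, hAim, neg_zero, zero_mul, add_zero] at this
  exact hx (by
    rcases mul_eq_zero.mp this with h | h
    · exact absurd h hAre
    · exact h)

lemma ke_lattice_summable (w : Fin 2 → ℂ)
    (hD : ((starRingEnd ℂ) (w 0) * w 1).im ≠ 0)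
    (z : ℂ) {t : ℝ} (ht : 2 < t) :
    Summable fun c : Fin 2 → ℤ =>
      ‖z + ((c 0 : ℂ) * w 0 + (c 1 : ℂ) * w 1)‖ ^ (-t) := by
  classical
  -- the real-linear map
  set L : (Fin 2 → ℝ) →ₗ[ℝ] ℂ :=
    { toFun := fun v => (v 0 : ℂ) * w 0 + (v 1 : ℂ) * w 1
      map_add' := by
        intro a b
        simp only [Pi.add_apply, Complex.ofReal_add]
        ring
      map_smul' := by
        intro r a
        simp only [Pi.smul_apply, smul_eq_mul, RingHom.id_apply, Complex.real_smul,
          Complex.ofReal_mul]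
        ring } with hLdef
  have hw0 : w 0 ≠ 0 := by
    intro h
    apply hD
    rw [h]
    simp
  have hLinj : Function.Injective L := by
    intro v v' h
    have h0 : L (v - v') = 0 := by
      rw [map_sub, h, sub_self]
    have hc : ((v - v') 0 : ℂ) * w 0 + ((v - v') 1 : ℂ) * w 1 = 0 := h0
    set u := v - v' with hu
    have him : ((starRingEnd ℂ) (w 0) * ((u 0 : ℂ) * w 0 + (u 1 : ℂ) * w 1)).im
        = u 1 * ((starRingEnd ℂ) (w 0) * w 1).im := by
      rw [mul_add, Complex.add_im]
      have e0 : ((starRingEnd ℂ) (w 0) * ((u 0 : ℂ) * w 0)).im = 0 := by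
        rw [show (starRingEnd ℂ) (w 0) * ((u 0 : ℂ) * w 0)
            = (u 0 : ℂ) * ((starRingEnd ℂ) (w 0) * w 0) by ring,
          Complex.conj_mul', ← Complex.ofReal_pow, ← Complex.ofReal_mul]
        exact Complex.ofReal_im _
      rw [e0, zero_add, show (starRingEnd ℂ) (w 0) * ((u 1 : ℂ) * w 1)
          = (u 1 : ℂ) * ((starRingEnd ℂ) (w 0) * w 1) by ring, Complex.mul_im]
      simp
    rw [hc, mul_zero] at him
    have hu1 : u 1 = 0 := by
      rcases mul_eq_zero.mp him.symm with h | h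
      · exact h
      · exact absurd h hD
    have hu0 : u 0 = 0 := by
      rw [hu1] at hc
      simp only [Complex.ofReal_zero, zero_mul, add_zero, mul_eq_zero] at hc
      rcases hc with h | h
      · exact_mod_cast h
      · exact absurd h hw0
    have : u = 0 := by
      funext i
      fin_cases i
      · exact hu0
      · exact hu1
    exact sub_eq_zero.mp (by rwa [← hu])
  have hrank : Module.finrank ℝ (Fin 2 → ℝ) = Module.finrank ℝ ℂ := by
    simp [Complex.finrank_real_complex]
  let Leq := LinearMap.linearEquivOfInjective L hLinj hrank
  let Ceq := Leq.toContinuousLinearEquiv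
  set C : ℝ := max ‖(Ceq.symm : ℂ →L[ℝ] (Fin 2 → ℝ))‖ 1 with hCdef
  have hC1 : 1 ≤ C := le_max_right _ _
  have hC0 : 0 < C := lt_of_lt_of_le one_pos hC1
  have hCle : ∀ v : Fin 2 → ℝ, ‖v‖ ≤ C * ‖L v‖ := by
    intro v
    have h9 : ‖(Ceq.symm : ℂ →L[ℝ] (Fin 2 → ℝ)) (Ceq v)‖
        ≤ ‖(Ceq.symm : ℂ →L[ℝ] (Fin 2 → ℝ))‖ * ‖Ceq v‖ :=
      ContinuousLinearMap.le_opNorm _ _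
    have h10 : (Ceq.symm : ℂ →L[ℝ] (Fin 2 → ℝ)) (Ceq v) = v := Ceq.symm_apply_apply v
    rw [h10] at h9
    have h11 : ‖Ceq v‖ = ‖L v‖ := rfl
    rw [h11] at h9
    refine h9.trans (mul_le_mul (le_max_left _ _) le_rfl (norm_nonneg _) hC0.le)
  -- norms of integer vectors
  have hnorm : ∀ c : Fin 2 → ℤ, ‖(fun i => (c i : ℝ))‖ = ‖c‖ := by
    intro c
    simp only [Pi.norm_def, Pi.nnnorm_def]
    norm_cast
  -- the comparison
  set R := ‖z‖ with hR
  have hR0 : 0 ≤ R := norm_nonneg z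
  apply Summable.of_norm_bounded_eventually
    (g := fun c : Fin 2 → ℤ => (2 * C) ^ t * ‖c‖ ^ (-t))
    ((EisensteinSeries.summable_one_div_norm_rpow ht).mul_left _)
  rw [Filter.eventually_cofinite]
  have hfin : {c : Fin 2 → ℤ | ‖c‖ < 2 * C * (R + 1)}.Finite := by
    set M : ℤ := ⌈(2 * C * (R + 1))⌉
    apply Set.Finite.subset (Set.finite_Icc (fun _ => -M) (fun _ => M))
    intro c hc
    simp only [Set.mem_setOf_eq] at hc
    have habs : ∀ i, |(c i : ℝ)| ≤ 2 * C * (R + 1) := by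
      intro i
      have h1 : ‖c i‖ ≤ ‖c‖ := norm_le_pi_norm c i
      rw [Int.norm_eq_abs] at h1
      push_cast at h1
      exact le_of_lt (lt_of_le_of_lt h1 hc)
    refine ⟨fun i => ?_, fun i => ?_⟩
    · have h2 := (abs_le.mp (habs i)).1
      have h3 : (-(M : ℝ)) ≤ (c i : ℝ) :=
        le_trans (neg_le_neg (Int.le_ceil _)) h2
      exact_mod_cast h3
    · have h2 := (abs_le.mp (habs i)).2
      have h3 : (c i : ℝ) ≤ (M : ℝ) := le_trans h2 (Int.le_ceil _)
      exact_mod_cast h3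
  apply Set.Finite.subset hfin
  intro c hc
  simp only [Set.mem_setOf_eq] at hc ⊢
  by_contra hlt
  push_neg at hlt
  apply hc
  -- now ‖c‖ ≥ 2C(R+1)
  have key : ‖z + ((c 0 : ℂ) * w 0 + (c 1 : ℂ) * w 1)‖ ≥ ‖c‖ / (2 * C) := by
    have hLc : ((c 0 : ℂ) * w 0 + (c 1 : ℂ) * w 1) = L (fun i => (c i : ℝ)) := by
      simp [hLdef]
    have h1 : ‖c‖ ≤ C * ‖L (fun i => (c i : ℝ))‖ := by
      rw [← hnorm c]
      exact hCle _
    have h2 : ‖z + L (fun i => (c i : ℝ))‖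
        ≥ ‖L (fun i => (c i : ℝ))‖ - R := by
      have h2' : ‖L (fun i => (c i : ℝ))‖ ≤ ‖z + L (fun i => (c i : ℝ))‖ + ‖z‖ := by
        simpa [add_sub_cancel_left] using norm_sub_le (z + L (fun i => (c i : ℝ))) z
      simp only [hR]
      linarith
    rw [hLc]
    have h3 : ‖c‖ / C - R ≥ ‖c‖ / (2 * C) := by
      have h4 : 2 * C * (R + 1) ≤ ‖c‖ := hlt
      have h5 : ‖c‖ / C - ‖c‖ / (2 * C) = ‖c‖ / (2 * C) := by
        field_simp
        ring
      have h6 : R ≤ ‖c‖ / (2 * C) := by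
        rw [le_div_iff₀ (by positivity)]
        nlinarith
      linarith [h6, h5]
    have h7 : ‖c‖ / C ≤ ‖L (fun i => (c i : ℝ))‖ := by
      rw [div_le_iff₀ hC0]
      linarith [h1, mul_comm C (‖L (fun i => (c i : ℝ))‖)]
    linarith
  have hpos : 0 < ‖c‖ / (2 * C) := by
    have : (0:ℝ) < 2 * C * (R + 1) := by positivity
    have h8 : 0 < ‖c‖ := lt_of_lt_of_le this hlt
    positivity
  rw [Real.norm_of_nonneg (Real.rpow_nonneg (norm_nonneg _) _)]
  calc ‖z + ((c 0 : ℂ) * w 0 + (c 1 : ℂ) * w 1)‖ ^ (-t)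
      ≤ (‖c‖ / (2 * C)) ^ (-t) :=
        Real.rpow_le_rpow_of_nonpos hpos key (by linarith)
    _ = (2 * C) ^ t * ‖c‖ ^ (-t) := by
        rw [Real.div_rpow (norm_nonneg _) (by positivity),
          Real.rpow_neg (by positivity : (0:ℝ) ≤ 2*C)]
        field_simp

/-- let `k` be an imaginary quadratic field with a fixed complex embedding
`σ : k → ℂ`, let `𝔞` be a nonzero fractional ideal of `k`, let `p, q ≥ 0`, let `z ∈ ℂ`
with `z ∉ σ(𝔞)`, and let `s ∈ ℂ` with `Re(s) > 1 + q − p`.  Then the family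
`(a ∈ 𝔞) ↦ conj(z+σ(a))^q / ((z+σ(a))^{p+1} |z+σ(a)|^{s})` is summable, i.e. the
Kronecker–Eisenstein series `K^{p,q}(z,𝔞,s)` converges absolutely in that range.
(Here `|w|^s = exp(s log |w|)`.) -/
theorem kroneckerEisenstein_summable
    (k : Type*) [Field k] [NumberField k]
    (hdeg : Module.finrank ℚ k = 2)
    (σ : k →+* ℂ) (him : ∃ x : k, (σ x).im ≠ 0)
    (𝔞 : FractionalIdeal (nonZeroDivisors (𝓞 k)) k) (h𝔞 : 𝔞 ≠ 0)
    (p q : ℕ) (z : ℂ) (hz : ∀ x ∈ 𝔞, z ≠ σ x)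
    (s : ℂ) (hs : 1 + (q : ℝ) - (p : ℝ) < s.re) :
    Summable (fun a : {x : k // x ∈ 𝔞} =>
      (starRingEnd ℂ) (z + σ a.1) ^ q /
        ((z + σ a.1) ^ (p + 1) * ((‖z + σ a.1‖ : ℂ)) ^ s)) := by
  classical
  set I : (FractionalIdeal (nonZeroDivisors (𝓞 k)) k)ˣ := Units.mk0 𝔞 h𝔞 with hI
  have hcard : Fintype.card (Module.Free.ChooseBasisIndex ℤ I) = 2 := by
    rw [← Module.finrank_eq_card_chooseBasisIndex, fractionalIdeal_rank,
      RingOfIntegers.rank, hdeg]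
  let e : Fin 2 ≃ Module.Free.ChooseBasisIndex ℤ I :=
    Fintype.equivOfCardEq (by rw [Fintype.card_fin, hcard])
  let b : Module.Basis (Fin 2) ℚ k := (basisOfFractionalIdeal k I).reindex e.symm
  have hbmem : ∀ x : k, x ∈ Submodule.span ℤ (Set.range b) ↔ x ∈ 𝔞 := by
    intro x
    rw [show Set.range b = Set.range (basisOfFractionalIdeal k I) from
      Module.Basis.range_reindex _ _, mem_span_basisOfFractionalIdeal]
    simp [hI]
  have hmem : ∀ c : Fin 2 → ℤ, (c 0 • b 0 + c 1 • b 1) ∈ 𝔞 := by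
    intro c
    refine (hbmem _).mp (Submodule.add_mem _ ?_ ?_) <;>
      exact Submodule.smul_mem _ _ (Submodule.subset_span (Set.mem_range_self _))
  let g : (Fin 2 → ℤ) → {x : k // x ∈ 𝔞} := fun c => ⟨c 0 • b 0 + c 1 • b 1, hmem c⟩
  have hsum : ∀ c : Fin 2 → ℤ,
      c 0 • b 0 + c 1 • b 1 = ∑ i : Fin 2, ((c i : ℚ)) • b i := by
    intro c
    rw [Fin.sum_univ_two, Int.cast_smul_eq_zsmul, Int.cast_smul_eq_zsmul]
  have hginj : Function.Injective g := by
    intro c d h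
    have h' : ∑ i : Fin 2, ((c i : ℚ)) • b i = ∑ i : Fin 2, ((d i : ℚ)) • b i := by
      rw [← hsum, ← hsum]
      exact congrArg Subtype.val h
    have h'' : ∑ i : Fin 2, (((c i - d i : ℤ) : ℚ)) • b i = 0 := by
      push_cast
      simp only [sub_smul]
      rw [Finset.sum_sub_distrib, h', sub_self]
    have h3 := Fintype.linearIndependent_iff.mp b.linearIndependent
      (fun i => ((c i - d i : ℤ) : ℚ)) h''
    funext i
    have h4 := h3 i
    rw [Int.cast_eq_zero, sub_eq_zero] at h4
    exact h4
  have hgsurj : Function.Surjective g := by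
    rintro ⟨x, hx⟩
    obtain ⟨c, hc⟩ := (Submodule.mem_span_range_iff_exists_fun ℤ).mp ((hbmem x).mpr hx)
    refine ⟨c, Subtype.ext ?_⟩
    show c 0 • b 0 + c 1 • b 1 = x
    rw [← Fin.sum_univ_two (f := fun i => c i • b i)]
    exact hc
  set w : Fin 2 → ℂ := fun i => σ (b i) with hw
  have hσg : ∀ c : Fin 2 → ℤ, σ ((g c : k)) = (c 0 : ℂ) * w 0 + (c 1 : ℂ) * w 1 := by
    intro c
    show σ (c 0 • b 0 + c 1 • b 1) = _
    rw [map_add, map_zsmul, map_zsmul, zsmul_eq_mul, zsmul_eq_mul]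
  set t : ℝ := (p : ℝ) + 1 - q + s.re with htdef
  have ht : 2 < t := by
    rw [htdef]; linarith
  have hD := ke_det_ne_zero k σ him b
  rw [← (Equiv.ofBijective g ⟨hginj, hgsurj⟩).summable_iff]
  refine Summable.of_norm ?_
  refine (ke_lattice_summable w hD z ht).congr fun c => ?_
  have hE : (Equiv.ofBijective g ⟨hginj, hgsurj⟩) c = g c := rfl
  simp only [Function.comp_apply, hE]
  have hne : z + σ ((g c : k)) ≠ 0 := by
    intro h0
    have hmem' : (-(g c : k)) ∈ 𝔞 := by
      rw [← FractionalIdeal.mem_coe]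
      exact Submodule.neg_mem _ (FractionalIdeal.mem_coe.mpr (g c).2)
    apply hz _ hmem'
    rw [map_neg]
    linear_combination h0
  rw [ke_norm_term _ hne p q s, hσg]

end
end

section
/- Let k be an imaginary quadratic field with ring of integers O and a fixed complex embedding σ: k → ℂ, let N ≥ 1, and let Λ ⊆ k^N be an O-lattice (a finitely generated O-submodule of k^N that spans k^N over k). Let I = (i_1,…,i_N) and J = (j_1,…,j_N) be tuples of non-negative integers, let z = (z_1,…,z_N) ∈ ℂ^N satisfy z_k + σ(λ_k) ≠ 0 for every λ = (λ_1,…,λ_N) ∈ Λ and every 1 ≤ k ≤ N, and let s ∈ ℂ with Re(s) > 1 + max_k (j_k − i_k). Then the family (λ ∈ Λ) ↦ Π_{k=1}^N ( i_k! · conj(z_k + σ(λ_k))^{j_k} / ( (z_k + σ(λ_k))^{i_k+1} · |z_k + σ(λ_k)|^{s} ) ) is summable; i.e. the series K^{I,J}(z, Λ, s) converges absolutely in that range. -/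
open NumberField BigOperators

noncomputable section

lemma aux_lowbound (w : Fin 2 → ℂ) (hw : LinearIndependent ℝ w) :
    ∃ c > 0, ∀ x : Fin 2 → ℝ, c * ‖x‖ ≤ ‖∑ i, x i • w i‖ := by
  have hcard : Fintype.card (Fin 2) = Module.finrank ℝ ℂ := by
    simp [Complex.finrank_real_complex]
  let B : Module.Basis (Fin 2) ℝ ℂ := basisOfLinearIndependentOfCardEqFinrank hw hcard
  have hB : ∀ i, B i = w i := fun i => by
    simp [B, coe_basisOfLinearIndependentOfCardEqFinrank]
  set L := B.equivFunL
  set C := max ‖(L : ℂ →L[ℝ] (Fin 2 → ℝ))‖ 1 with hC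
  have hC1 : 1 ≤ C := le_max_right _ _
  have hCpos : 0 < C := lt_of_lt_of_le one_pos hC1
  refine ⟨C⁻¹, inv_pos.mpr hCpos, fun x => ?_⟩
  have hrep : B.equivFun (∑ i, x i • w i) = x := by
    have : (∑ i, x i • w i) = ∑ i, x i • B i := by
      simp [hB]
    rw [this, ← B.equivFun_symm_apply, B.equivFun.apply_symm_apply]
  have hle : ‖x‖ ≤ C * ‖∑ i, x i • w i‖ := by
    calc ‖x‖ = ‖L (∑ i, x i • w i)‖ := by
          rw [show L (∑ i, x i • w i) = B.equivFun (∑ i, x i • w i) from rfl, hrep]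
      _ ≤ ‖(L : ℂ →L[ℝ] (Fin 2 → ℝ))‖ * ‖∑ i, x i • w i‖ :=
          (L : ℂ →L[ℝ] (Fin 2 → ℝ)).le_opNorm _
      _ ≤ C * ‖∑ i, x i • w i‖ := by
          gcongr; exact le_max_left _ _
  rw [inv_mul_le_iff₀ hCpos] at *
  · linarith [hle]

lemma aux_summable_int2 {t : ℝ} (ht : 2 < t) :
    Summable fun x : Fin 2 → ℤ => (max 1 ‖x‖) ^ (-t) := by
  have h1 := EisensteinSeries.summable_one_div_norm_rpow ht
  have h2 : Summable fun x : Fin 2 → ℤ => (if x = 0 then (1:ℝ) else 0) :=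
    (hasSum_ite_eq (0 : Fin 2 → ℤ) (1:ℝ)).summable.congr (by
      intro x; by_cases h : x = 0 <;> simp [h])
  refine Summable.of_nonneg_of_le (fun x => by positivity) (fun x => ?_) (h1.add h2)
  by_cases h : x = 0
  · subst h
    rw [norm_zero, max_eq_left zero_le_one, Real.one_rpow,
      Real.zero_rpow (by linarith : -t ≠ 0)]
    simp
  · have h1 : (1:ℝ) ≤ ‖x‖ := by
      have : x ≠ 0 := h
      obtain ⟨i, hi⟩ := Function.ne_iff.mp this
      calc (1:ℝ) ≤ ‖x i‖ := by
            have : x i ≠ 0 := hi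
            have := Int.one_le_abs (by simpa using this)
            rw [Int.norm_eq_abs]; exact_mod_cast this
        _ ≤ ‖x‖ := norm_le_pi_norm x i
    rw [max_eq_right h1]
    simp [h, le_add_iff_nonneg_right]

lemma aux_norm_intCast (x : Fin 2 → ℤ) : ‖(fun i => (x i : ℝ))‖ = ‖x‖ := by
  have : ∀ i, ‖((x i : ℝ))‖₊ = ‖x i‖₊ := fun i => by
    ext; simp [Int.norm_eq_abs]
  simp only [Pi.norm_def, this]

lemma aux_summable_pi {α : Type*} : ∀ (n : ℕ) (g : Fin n → α → ℝ),
    (∀ i a, 0 ≤ g i a) → (∀ i, Summable (g i)) →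
    Summable fun a : Fin n → α => ∏ i, g i (a i) := by
  intro n
  induction n with
  | zero =>
    intro g _ _
    have : (fun a : Fin 0 → α => ∏ i, g i (a i)) = fun _ => 1 := by
      funext a; simp
    rw [this]
    exact summable_of_finite_support (Set.toFinite _)
  | succ n ih =>
    intro g hg hgs
    have h2 : Summable fun y : Fin n → α => ∏ i : Fin n, g i.succ (y i) :=
      ih (fun i a => g i.succ a) (fun i a => hg _ _) (fun i => hgs _)
    have ha : (0 : α → ℝ) ≤ g 0 := fun a => hg 0 a
    have hb : (0 : (Fin n → α) → ℝ) ≤ fun y => ∏ i : Fin n, g i.succ (y i) :=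
      fun y => Finset.prod_nonneg fun i _ => hg _ _
    have key := Summable.mul_of_nonneg (hgs 0) h2 ha hb
    rw [← (Fin.consEquiv (fun _ : Fin (n+1) => α)).summable_iff]
    refine key.congr fun p => ?_
    simp only [Function.comp_apply, Fin.consEquiv_apply, Fin.prod_univ_succ,
      Fin.cons_zero, Fin.cons_succ]

lemma aux_linIndep (k : Type*) [Field k] [NumberField k]
    (σ : k →+* ℂ) (him : ∃ x : k, (σ x).im ≠ 0)
    (B : Module.Basis (Fin 2) ℤ (𝓞 k)) :
    LinearIndependent ℝ (fun i : Fin 2 => σ (algebraMap (𝓞 k) k (B i))) := by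
  set φ : 𝓞 k →+* ℂ := σ.comp (algebraMap (𝓞 k) k) with hφ
  have hφi : Function.Injective φ :=
    σ.injective.comp (IsFractionRing.injective (𝓞 k) k)
  have hw : ∀ i, σ (algebraMap (𝓞 k) k (B i)) = φ (B i) := fun i => rfl
  simp only [hw]
  rw [linearIndependent_fin2]
  constructor
  · intro h
    exact B.ne_zero 1 (hφi (by simpa using h))
  · intro a ha
    -- every φ x is a real multiple of φ (B 1)
    have key : ∀ x : 𝓞 k, ∃ r : ℝ, φ x = r • φ (B 1) := by
      intro x
      refine ⟨(B.repr x 0 : ℝ) * a + (B.repr x 1 : ℝ), ?_⟩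
      have hx := B.sum_repr x
      have : φ x = (B.repr x 0) • φ (B 0) + (B.repr x 1) • φ (B 1) := by
        conv_lhs => rw [← hx, Fin.sum_univ_two]
        rw [map_add, map_zsmul, map_zsmul]
      rw [this, ← ha]
      push_cast [zsmul_eq_mul, smul_eq_mul, Complex.real_smul]
      ring
    -- hence φ (B 1) is real and everything is real
    obtain ⟨r1, hr1⟩ := key 1
    have hone : (1 : ℂ) = r1 • φ (B 1) := by rw [← hr1, map_one]
    have him1 : (φ (B 1)).im = 0 := by
      have hr1ne : r1 ≠ 0 := by
        intro h; rw [h, zero_smul] at hone; exact one_ne_zero hone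
      have h3 : (r1 : ℂ) * φ (B 1) = 1 := by
        rw [Complex.real_smul] at hone; exact hone.symm
      have : φ (B 1) = ((r1 : ℂ))⁻¹ := eq_inv_of_mul_eq_one_left (by rw [mul_comm]; exact h3)
      rw [this, ← Complex.ofReal_inv]; simp
    have himall : ∀ x : 𝓞 k, (φ x).im = 0 := by
      intro x
      obtain ⟨r, hr⟩ := key x
      rw [hr, Complex.real_smul, Complex.mul_im]
      simp [him1]
    obtain ⟨x0, hx0⟩ := him
    obtain ⟨u, v, hv, huv⟩ := IsFractionRing.div_surjective (A := 𝓞 k) x0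
    apply hx0
    rw [← huv]
    have h1 : (σ (algebraMap (𝓞 k) k u)) = Complex.ofReal ((φ u).re) := by
      have := himall u; exact Complex.ext rfl (by simpa [hφ] using this)
    have h2 : (σ (algebraMap (𝓞 k) k v)) = Complex.ofReal ((φ v).re) := by
      have := himall v; exact Complex.ext rfl (by simpa [hφ] using this)
    rw [map_div₀, h1, h2, ← Complex.ofReal_div]
    simp

lemma aux_core (k : Type*) [Field k] [NumberField k]
    (hdeg : Module.finrank ℚ k = 2)
    (σ : k →+* ℂ) (him : ∃ x : k, (σ x).im ≠ 0) :
    ∃ (e : (Fin 2 → ℤ) ≃ 𝓞 k) (c : ℝ), 0 < c ∧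
      ∀ x : Fin 2 → ℤ, c * ‖x‖ ≤ ‖σ (algebraMap (𝓞 k) k (e x))‖ := by
  have hrank : Module.finrank ℤ (𝓞 k) = 2 := by
    rw [NumberField.RingOfIntegers.rank, hdeg]
  let B0 := Module.Free.chooseBasis ℤ (𝓞 k)
  have hcard : Fintype.card (Module.Free.ChooseBasisIndex ℤ (𝓞 k)) = 2 := by
    rw [Module.finrank_eq_card_chooseBasisIndex] at hrank; exact hrank
  let B := B0.reindex (Fintype.equivFinOfCardEq hcard)
  obtain ⟨c, hc, hbound⟩ := aux_lowbound _ (aux_linIndep k σ him B)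
  refine ⟨B.equivFun.symm.toEquiv, c, hc, fun x => ?_⟩
  have he : B.equivFun.symm.toEquiv x = ∑ i, x i • B i := B.equivFun_symm_apply x
  rw [he]
  have hmap : σ (algebraMap (𝓞 k) k (∑ i, x i • B i))
      = ∑ i, (x i : ℝ) • σ (algebraMap (𝓞 k) k (B i)) := by
    rw [map_sum, map_sum]
    congr 1; funext i
    rw [map_zsmul, map_zsmul]
    rw [zsmul_eq_mul, Complex.real_smul]
    push_cast; ring
  rw [hmap]
  have := hbound (fun i => (x i : ℝ))
  rwa [aux_norm_intCast] at this

lemma aux_finite (k : Type*) [Field k] [NumberField k]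
    (hdeg : Module.finrank ℚ k = 2)
    (σ : k →+* ℂ) (him : ∃ x : k, (σ x).im ≠ 0) (R : ℝ) :
    {a : 𝓞 k | ‖σ (algebraMap (𝓞 k) k a)‖ ≤ R}.Finite := by
  obtain ⟨e, c, hc, hb⟩ := aux_core k hdeg σ him
  have : {a : 𝓞 k | ‖σ (algebraMap (𝓞 k) k a)‖ ≤ R}
      = e '' {x | ‖σ (algebraMap (𝓞 k) k (e x))‖ ≤ R} :=
    (Set.image_preimage_eq _ e.surjective).symm
  rw [this]
  apply Set.Finite.image
  set M : ℤ := ⌈R / c⌉ with hM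
  apply Set.Finite.subset (Finset.Icc (fun _ : Fin 2 => -M) (fun _ => M)).finite_toSet
  intro x hx
  simp only [Set.mem_setOf_eq] at hx
  have h1 : c * ‖x‖ ≤ R := le_trans (hb x) hx
  have h2 : ‖x‖ ≤ R / c := by
    rw [le_div_iff₀ hc]; linarith [h1]
  simp only [Finset.coe_Icc, Set.mem_Icc, Pi.le_def]
  have key : ∀ i, -M ≤ x i ∧ x i ≤ M := by
    intro i
    apply abs_le.mp
    have hxi : (|x i| : ℝ) ≤ R / c := by
      calc (|x i| : ℝ) = ‖x i‖ := by simp [Int.norm_eq_abs]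
        _ ≤ ‖x‖ := norm_le_pi_norm x i
        _ ≤ R / c := h2
    have : (|x i| : ℝ) ≤ (M : ℝ) := le_trans hxi (by rw [hM]; exact Int.le_ceil _)
    exact_mod_cast this
  exact ⟨fun i => (key i).1, fun i => (key i).2⟩

lemma aux_summable_ok (k : Type*) [Field k] [NumberField k]
    (hdeg : Module.finrank ℚ k = 2)
    (σ : k →+* ℂ) (him : ∃ x : k, (σ x).im ≠ 0)
    {t : ℝ} (ht : 2 < t) :
    Summable fun a : 𝓞 k =>
      (max 1 (‖σ (algebraMap (𝓞 k) k a)‖)) ^ (-t) := by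
  obtain ⟨e, c, hc, hb⟩ := aux_core k hdeg σ him
  rw [← e.summable_iff]
  set c' := min 1 c with hc'
  have hc'pos : 0 < c' := lt_min one_pos hc
  have key : ∀ x : Fin 2 → ℤ,
      ((max 1 (‖σ (algebraMap (𝓞 k) k (e x))‖)) ^ (-t) : ℝ)
        ≤ c' ^ (-t) * (max 1 ‖x‖) ^ (-t) := by
    intro x
    have h1 : c' * max 1 ‖x‖ ≤ max 1 (‖σ (algebraMap (𝓞 k) k (e x))‖) := by
      rcases max_cases 1 ‖x‖ with ⟨hmax, hle⟩ | ⟨hmax, hlt⟩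
      · rw [hmax]
        calc c' * 1 ≤ 1 := by rw [mul_one]; exact min_le_left _ _
          _ ≤ _ := le_max_left _ _
      · rw [hmax]
        calc c' * ‖x‖ ≤ c * ‖x‖ := by
              apply mul_le_mul_of_nonneg_right (min_le_right _ _) (norm_nonneg _)
          _ ≤ ‖σ (algebraMap (𝓞 k) k (e x))‖ := hb x
          _ ≤ max 1 _ := le_max_right _ _
    rw [← Real.mul_rpow hc'pos.le (le_trans zero_le_one (le_max_left _ _))]
    apply Real.rpow_le_rpow_of_nonpos
    · positivity
    · exact h1
    · linarith
  apply Summable.of_nonneg_of_le (fun x => by positivity) key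
  exact ((aux_summable_int2 ht).mul_left _)

/-- let `k` be an imaginary quadratic field with a fixed complex embedding
`σ : k → ℂ`, let `N = n+1 ≥ 1`, and let `Λ ⊆ k^N` be an `O`-lattice (a finitely generated
`O`-submodule spanning `k^N` over `k`).  Let `I, J` be tuples of non-negative integers,
let `z ∈ ℂ^N` with `z_m + σ(λ_m) ≠ 0` for every `λ ∈ Λ` and every `m`, and let `s ∈ ℂ`
with `Re(s) > 1 + max_m (J_m − I_m)`.  Then the family
`(λ ∈ Λ) ↦ Π_m I_m! · conj(z_m+σ(λ_m))^{J_m} / ((z_m+σ(λ_m))^{I_m+1} |z_m+σ(λ_m)|^{s})`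
is summable, i.e. the series `K^{I,J}(z,Λ,s)` converges absolutely in that range. -/
theorem kroneckerEisenstein_lattice_summable
    (k : Type*) [Field k] [NumberField k]
    (hdeg : Module.finrank ℚ k = 2)
    (σ : k →+* ℂ) (him : ∃ x : k, (σ x).im ≠ 0)
    (n : ℕ)
    (Λ : Submodule (𝓞 k) (Fin (n + 1) → k)) (hfg : Λ.FG)
    (hspan : Submodule.span k (Λ : Set (Fin (n + 1) → k)) = ⊤)
    (I J : Fin (n + 1) → ℕ)
    (z : Fin (n + 1) → ℂ)
    (hz : ∀ lam ∈ Λ, ∀ m : Fin (n + 1), z m + σ (lam m) ≠ 0)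
    (s : ℂ) (hs : ∀ m : Fin (n + 1), 1 + (J m : ℝ) - (I m : ℝ) < s.re) :
    Summable (fun lam : Λ =>
      ∏ m : Fin (n + 1), (Nat.factorial (I m) : ℂ) *
        (starRingEnd ℂ) (z m + σ (lam.1 m)) ^ (J m) /
          ((z m + σ (lam.1 m)) ^ (I m + 1) *
            (((‖z m + σ (lam.1 m)‖ : ℝ) : ℂ)) ^ s)) := by
  classical
  set A := algebraMap (𝓞 k) k with hA
  have hAinj : Function.Injective A := IsFractionRing.injective (𝓞 k) k
  -- exponents
  set t : Fin (n + 1) → ℝ := fun m => s.re + (I m + 1) - J m with ht_def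
  have ht : ∀ m, 2 < t m := fun m => by
    have := hs m; simp only [ht_def]; linarith
  -- common denominator
  obtain ⟨S, hS⟩ := hfg
  obtain ⟨b, hb⟩ := IsLocalization.exist_integer_multiples
    (nonZeroDivisors (𝓞 k)) (S ×ˢ (Finset.univ : Finset (Fin (n + 1))))
    (fun p => p.1 p.2)
  set d : 𝓞 k := (b : 𝓞 k) with hd_def
  have hd : d ≠ 0 := nonZeroDivisors.coe_ne_zero b
  have hAd : A d ≠ 0 := fun h => hd (hAinj (by simpa using h))
  -- the submodule of vectors with denominator d
  set M' : Submodule (𝓞 k) (Fin (n + 1) → k) :=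
    { carrier := {v | ∀ m, ∃ a : 𝓞 k, A a = A d * v m}
      add_mem' := by
        rintro v w hv hw m
        obtain ⟨a, ha⟩ := hv m
        obtain ⟨a', ha'⟩ := hw m
        exact ⟨a + a', by rw [map_add, ha, ha', Pi.add_apply]; ring⟩
      zero_mem' := fun m => ⟨0, by simp⟩
      smul_mem' := by
        rintro r v hv m
        obtain ⟨a, ha⟩ := hv m
        refine ⟨r * a, ?_⟩
        rw [map_mul, ha, Pi.smul_apply, Algebra.smul_def]
        ring } with hM'
  have hΛM : Λ ≤ M' := by
    rw [← hS]
    rw [Submodule.span_le]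
    intro g hg m
    have := hb ⟨g, m⟩ (Finset.mem_product.mpr ⟨hg, Finset.mem_univ m⟩)
    obtain ⟨a, ha⟩ := this
    exact ⟨a, by rw [ha]; rw [Algebra.smul_def]⟩
  -- the integer coordinates
  have hmem : ∀ lam : Λ, ∀ m, ∃ a : 𝓞 k, A a = A d * lam.1 m :=
    fun lam m => hΛM lam.2 m
  set ι : Λ → (Fin (n + 1) → 𝓞 k) := fun lam m => (hmem lam m).choose with hι_def
  have hι : ∀ lam m, A (ι lam m) = A d * lam.1 m := fun lam m => (hmem lam m).choose_spec
  have hinj : Function.Injective ι := by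
    intro lam lam' h
    ext m
    have h1 := hι lam m
    have h2 := hι lam' m
    rw [h] at h1
    rw [h1] at h2
    exact mul_left_cancel₀ hAd h2
  -- relation between σ values
  have hσ : ∀ lam : Λ, ∀ m, σ (A (ι lam m)) = σ (A d) * σ (lam.1 m) :=
    fun lam m => by rw [hι lam m, map_mul]
  set q : ℝ := ‖σ (A d)‖ with hq_def
  have hq : 0 < q := norm_pos_iff.mpr (fun h => hAd (σ.injective (by simpa using h)))
  -- key lower bound per coordinate
  have hkey : ∀ m : Fin (n + 1), ∃ c > 0, ∀ lam : Λ,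
      c * max 1 (‖σ (A (ι lam m))‖) ≤ ‖z m + σ (lam.1 m)‖ := by
    intro m
    set R : ℝ := max 1 (2 * q * ‖z m‖) with hR_def
    have hR1 : 1 ≤ R := le_max_left _ _
    have hRpos : 0 < R := lt_of_lt_of_le one_pos hR1
    have hRz : 2 * q * ‖z m‖ ≤ R := le_max_right _ _
    -- finite exceptional set
    set T' : Set (𝓞 k) := {a : 𝓞 k | ‖σ (A a)‖ ≤ R ∧
      z m + σ (A a) / σ (A d) ≠ 0} with hT'_def
    have hT'fin : T'.Finite :=
      (aux_finite k hdeg σ him R).subset (fun a ha => ha.1)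
    set f : 𝓞 k → ℝ := fun a => ‖z m + σ (A a) / σ (A d)‖ with hf_def
    have hδ : ∃ δ > 0, ∀ a ∈ T', δ ≤ f a := by
      by_cases hne : hT'fin.toFinset.Nonempty
      · refine ⟨hT'fin.toFinset.inf' hne f, ?_, ?_⟩
        · rw [gt_iff_lt, Finset.lt_inf'_iff]
          intro a ha
          rw [Set.Finite.mem_toFinset] at ha
          exact norm_pos_iff.mpr ha.2
        · intro a ha
          exact Finset.inf'_le f (hT'fin.mem_toFinset.mpr ha)
      · refine ⟨1, one_pos, fun a ha => absurd ⟨a, hT'fin.mem_toFinset.mpr ha⟩ hne⟩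
    obtain ⟨δ, hδpos, hδle⟩ := hδ
    refine ⟨min (1 / (2 * q)) (δ / R),
      lt_min (one_div_pos.mpr (by linarith)) (div_pos hδpos hRpos), fun lam => ?_⟩
    set X : ℝ := ‖σ (A (ι lam m))‖ with hX_def
    have hXnn : 0 ≤ X := norm_nonneg _
    have hvX : ‖σ (lam.1 m)‖ = X / q := by
      rw [hX_def, hσ lam m, norm_mul, ← hq_def, mul_comm, mul_div_assoc, div_self hq.ne',
        mul_one]
    have hfristval : σ (lam.1 m) = σ (A (ι lam m)) / σ (A d) := by
      rw [eq_div_iff (fun h => hAd (σ.injective (by simpa using h))), hσ lam m]; ring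
    by_cases hcase : X ≤ R
    · -- small case
      have haT' : (ι lam m) ∈ T' := by
        refine ⟨hcase, ?_⟩
        rw [← hfristval]
        exact hz lam.1 lam.2 m
      have hfa : δ ≤ ‖z m + σ (lam.1 m)‖ := by
        have := hδle _ haT'
        simp only [hf_def] at this
        rwa [← hfristval] at this
      calc min (1 / (2 * q)) (δ / R) * max 1 X ≤ (δ / R) * R := by
            apply mul_le_mul (min_le_right _ _) (max_le hR1 hcase)
              (le_trans zero_le_one (le_max_left _ _)) (div_pos hδpos hRpos).le
        _ = δ := by field_simp
        _ ≤ _ := hfa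
    · -- big case
      push_neg at hcase
      have hX1 : 1 ≤ X := le_trans hR1 hcase.le
      have hmaxX : max 1 X = X := max_eq_right hX1
      have htri : X / q - ‖z m‖ ≤ ‖z m + σ (lam.1 m)‖ := by
        have h1 : ‖σ (lam.1 m)‖ ≤
            ‖z m + σ (lam.1 m)‖ + ‖z m‖ := by
          have := norm_add_le (z m + σ (lam.1 m)) (-(z m))
          simpa using this
        rw [hvX] at h1
        linarith
      have hz_le : ‖z m‖ ≤ X / (2 * q) := by
        rw [le_div_iff₀ (by positivity)]
        calc ‖z m‖ * (2 * q) = 2 * q * ‖z m‖ := by ring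
          _ ≤ R := hRz
          _ ≤ X := hcase.le
      have hhalf : X / (2 * q) ≤ ‖z m + σ (lam.1 m)‖ := by
        have : X / q - X / (2 * q) = X / (2 * q) := by field_simp; ring
        linarith
      calc min (1 / (2 * q)) (δ / R) * max 1 X ≤ (1 / (2 * q)) * X := by
            rw [hmaxX]
            exact mul_le_mul_of_nonneg_right (min_le_left _ _) hXnn
        _ = X / (2 * q) := by ring
        _ ≤ _ := hhalf
  choose c hcpos hc using hkey
  -- the dominating function
  set F : (Fin (n + 1) → 𝓞 k) → ℝ := fun a =>
    ∏ m, (Nat.factorial (I m) : ℝ) * (c m) ^ (-(t m)) *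
      (max 1 (‖σ (A (a m))‖)) ^ (-(t m)) with hF_def
  have hFsummable : Summable F := by
    apply aux_summable_pi (n + 1)
      (fun m a => (Nat.factorial (I m) : ℝ) * (c m) ^ (-(t m)) *
        (max 1 (‖σ (A a)‖)) ^ (-(t m)))
    · intro i a
      apply mul_nonneg (mul_nonneg (by positivity) (Real.rpow_nonneg (hcpos i).le _))
        (Real.rpow_nonneg (le_trans zero_le_one (le_max_left _ _)) _)
    · intro i
      exact (aux_summable_ok k hdeg σ him (ht i)).mul_left _
  have hFι : Summable (F ∘ ι) := hFsummable.comp_injective hinj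
  apply Summable.of_norm_bounded hFι
  intro lam
  rw [norm_prod]
  simp only [Function.comp_apply, hF_def]
  apply Finset.prod_le_prod
  · intro m _; exact norm_nonneg _
  intro m _
  set w : ℂ := z m + σ (lam.1 m) with hw_def
  have hw : w ≠ 0 := hz lam.1 lam.2 m
  have hw' : 0 < ‖w‖ := norm_pos_iff.mpr hw
  have habs : ‖(Nat.factorial (I m) : ℂ) * (starRingEnd ℂ) w ^ (J m) /
      (w ^ (I m + 1) * ((‖w‖ : ℂ)) ^ s)‖
      = (Nat.factorial (I m) : ℝ) * (‖w‖) ^ (-(t m)) := by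
    rw [norm_div, norm_mul, norm_mul, norm_pow, norm_pow, Complex.norm_conj,
      Complex.norm_natCast, Complex.norm_cpow_eq_rpow_re_of_pos hw']
    rw [mul_div_assoc]
    congr 1
    rw [← Real.rpow_natCast (‖w‖) (J m),
      ← Real.rpow_natCast (‖w‖) (I m + 1),
      ← Real.rpow_add hw', ← Real.rpow_sub hw']
    congr 1
    simp only [ht_def]
    push_cast
    ring
  rw [habs]
  rw [mul_assoc]
  apply mul_le_mul_of_nonneg_left _ (by positivity : (0:ℝ) ≤ (Nat.factorial (I m) : ℝ))
  -- |w| ≥ c m * max 1 |φ a|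
  have hcm := hc m lam
  set M : ℝ := max 1 (‖σ (A (ι lam m))‖) with hM_def
  have hM1 : 1 ≤ M := le_max_left _ _
  have hMpos : 0 < M := lt_of_lt_of_le one_pos hM1
  calc (‖w‖) ^ (-(t m)) ≤ (c m * M) ^ (-(t m)) := by
        apply Real.rpow_le_rpow_of_nonpos (mul_pos (hcpos m) hMpos) hcm
        linarith [ht m]
    _ = (c m) ^ (-(t m)) * M ^ (-(t m)) :=
        Real.mul_rpow (hcpos m).le hMpos.le

end
end
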